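/- The second Rogers–Ramanujan identity: as formal power series in q, the sum over n ≥ 0 of q^(n^2+n)/(q;q)_n equals 1/((q^2;q^5)_∞ (q^3;q^5)_∞). -/

import Mathlib

open scoped Finset

noncomputable instance : TopologicalSpace (PowerSeries ℚ) :=
  Pi.topologicalSpace (ι := Unit →₀ ℕ) (Y := fun _ => ℚ)

/-- The formal variable `q`. -/
noncomputable def q : PowerSeries ℚ := PowerSeries.X

/-- The q-Pochhammer symbol `(q;q)_n = ∏_{k=0}^{n-1} (1 - q·q^k)`. -/
noncomputable def qPoch (n : ℕ) : PowerSeries ℚ :=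
  ∏ k ∈ Finset.range n, (1 - q ^ (k + 1))

/-- The Gaussian binomial coefficient `[m choose k]_q`, zero unless `k ≤ m`. -/
noncomputable def qBinom (m k : ℕ) : PowerSeries ℚ :=
  if k ≤ m then qPoch m * (qPoch k * qPoch (m - k))⁻¹ else 0

namespace RRaux

open PowerSeries Finset Filter

abbrev PS := PowerSeries ℚ

/-- agreement of coefficients up to degree `d` -/
def W (d : ℕ) (f g : PS) : Prop := ∀ i ≤ d, coeff i f = coeff i g

lemma W.refl (d : ℕ) (f : PS) : W d f f := fun _ _ => rfl

lemma W.symm {d f g} (h : W d f g) : W d g f := fun i hi => (h i hi).symm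

lemma W.trans {d f g h} (h1 : W d f g) (h2 : W d g h) : W d f h :=
  fun i hi => (h1 i hi).trans (h2 i hi)

lemma W.add {d f g f' g'} (h1 : W d f g) (h2 : W d f' g') : W d (f + f') (g + g') := by
  intro i hi; simp [map_add, h1 i hi, h2 i hi]

lemma W.sub {d f g f' g'} (h1 : W d f g) (h2 : W d f' g') : W d (f - f') (g - g') := by
  intro i hi; simp [map_sub, h1 i hi, h2 i hi]

lemma W.mul {d f g f' g'} (h1 : W d f g) (h2 : W d f' g') : W d (f * f') (g * g') := by
  intro i hi
  rw [coeff_mul, coeff_mul]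
  refine Finset.sum_congr rfl fun p hp => ?_
  rw [Finset.HasAntidiagonal.mem_antidiagonal] at hp
  have hp1 : p.1 ≤ d := le_trans (le_trans (Nat.le.intro hp) hi) (le_refl d)
  have hp2 : p.2 ≤ d := by omega
  rw [h1 p.1 hp1, h2 p.2 hp2]

lemma W.sum {d : ℕ} {α : Type*} (s : Finset α) (f g : α → PS)
    (h : ∀ a ∈ s, W d (f a) (g a)) : W d (∑ a ∈ s, f a) (∑ a ∈ s, g a) := by
  intro i hi
  rw [map_sum, map_sum]
  exact Finset.sum_congr rfl fun a ha => h a ha i hi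

lemma W.zero_add {d f g h} (h1 : W d f 0) (h2 : W d g h) : W d (f + g) h := by
  have := h1.add h2; simpa using this

lemma W.mul_left_zero {d : ℕ} {f : PS} (g : PS) (h : W d f 0) : W d (g * f) 0 := by
  have := (W.refl d g).mul h; simpa using this

/-- sum over a bigger set agrees if extra terms vanish up to degree d -/
lemma W.sum_subset {d : ℕ} {α : Type*} {s t : Finset α} (hst : s ⊆ t) (f : α → PS)
    (h : ∀ a ∈ t, a ∉ s → W d (f a) 0) : W d (∑ a ∈ t, f a) (∑ a ∈ s, f a) := by
  intro i hi
  rw [map_sum, map_sum]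
  refine (Finset.sum_subset hst fun a ha has => ?_).symm
  simpa using h a ha has i hi

lemma coeff_q_pow (m i : ℕ) : coeff i (q ^ m) = if m = i then 1 else 0 := by
  simp [q, coeff_X_pow, eq_comm]

lemma W_q_pow_zero {d m : ℕ} (h : d < m) : W d (q ^ m) 0 := by
  intro i hi
  rw [coeff_q_pow]
  simp only [map_zero]
  rw [if_neg (by omega)]

lemma W_one_sub_q_pow {d m : ℕ} (h : d < m) : W d (1 - q ^ m) 1 := by
  have := (W.refl d 1).sub (W_q_pow_zero h)
  simpa using this

lemma W_q_pow_mul_zero {d m : ℕ} (f : PS) (h : d < m) : W d (q ^ m * f) 0 := by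
  intro i hi
  rw [coeff_mul, map_zero]
  refine Finset.sum_eq_zero fun p hp => ?_
  rw [Finset.HasAntidiagonal.mem_antidiagonal] at hp
  rw [coeff_q_pow, if_neg (by omega), zero_mul]

lemma W.prod_one {d : ℕ} {α : Type*} (s : Finset α) (f : α → PS)
    (h : ∀ a ∈ s, W d (f a) 1) : W d (∏ a ∈ s, f a) 1 := by
  classical
  induction s using Finset.induction_on with
  | empty => simpa using W.refl d 1
  | @insert a s' hx ih =>
      rw [Finset.prod_insert hx]
      have h1 := h a (Finset.mem_insert_self a s')
      have h2 := ih fun b hb => h b (Finset.mem_insert_of_mem hb)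
      have := h1.mul h2; simpa using this

/-- equal constant coefficients at 0 -/
lemma W.cc {d f g} (h : W d f g) : constantCoeff f = constantCoeff g := by
  have := h 0 (Nat.zero_le d); simpa [PowerSeries.coeff_zero_eq_constantCoeff] using this

lemma W.inv {d f g} (h : W d f g) (hf : constantCoeff f ≠ 0) : W d f⁻¹ g⁻¹ := by
  have hg : constantCoeff g ≠ 0 := h.cc ▸ hf
  have key : f⁻¹ - g⁻¹ = f⁻¹ * ((g - f) * g⁻¹) := by
    have h1 : f * f⁻¹ = 1 := PowerSeries.mul_inv_cancel f hf
    have h2 : g * g⁻¹ = 1 := PowerSeries.mul_inv_cancel g hg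
    calc f⁻¹ - g⁻¹ = f⁻¹ * (g * g⁻¹) - (f * f⁻¹) * g⁻¹ := by rw [h1, h2]; ring
    _ = f⁻¹ * ((g - f) * g⁻¹) := by ring
  have hz : W d ((g - f) * g⁻¹) 0 := by
    have : W d (g - f) 0 := by have := h.symm.sub (W.refl d f); simpa using this
    intro i hi
    rw [coeff_mul, map_zero]
    refine Finset.sum_eq_zero fun p hp => ?_
    rw [Finset.HasAntidiagonal.mem_antidiagonal] at hp
    have := this p.1 (by omega)
    simp only [map_zero] at this
    rw [this, zero_mul]
  have hz2 : W d (f⁻¹ * ((g - f) * g⁻¹)) 0 := W.mul_left_zero _ hz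
  intro i hi
  have h3 : coeff i (f⁻¹ - g⁻¹) = 0 := by
    rw [key]; simpa using hz2 i hi
  rw [map_sub, sub_eq_zero] at h3
  exact h3

/-- if `f * u ≈ 1` then `f ≈ u⁻¹` -/
lemma W.eq_inv {d : ℕ} {f u : PS} (h : W d (f * u) 1) (hu : constantCoeff u ≠ 0) :
    W d f u⁻¹ := by
  have h2 : W d (f * u * u⁻¹) (1 * u⁻¹) := h.mul (W.refl d u⁻¹)
  have h3 : f * u * u⁻¹ = f := by
    rw [mul_assoc, PowerSeries.mul_inv_cancel u hu, mul_one]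
  rw [h3, one_mul] at h2
  exact h2

end RRaux
namespace RRaux
open PowerSeries Finset Filter

instance : T2Space PS := inferInstanceAs (T2Space ((Unit →₀ ℕ) → ℚ))

lemma coeff_apply' (f : PS) (x : Unit →₀ ℕ) : f x = coeff (x ()) f := by
  have hx : x = Finsupp.single () (x ()) := (Finsupp.unique_single x)
  rw [PowerSeries.coeff]
  rw [MvPowerSeries.coeff_apply]
  exact congrArg f hx

lemma tendsto_iff_coeff {α : Type*} {l : Filter α} {F : α → PS} {g : PS} :
    Tendsto F l (nhds g) ↔
      ∀ d : ℕ, Tendsto (fun a => coeff d (F a)) l (nhds (coeff d g)) := by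
  constructor
  · intro h d
    have := (tendsto_pi_nhds (f := F) (g := (g : (Unit →₀ ℕ) → ℚ))).mp h (Finsupp.single () d)
    simp only [coeff_apply'] at this
    simpa using this
  · intro h
    refine (tendsto_pi_nhds (f := F) (g := (g : (Unit →₀ ℕ) → ℚ))).mpr fun x => ?_
    have := h (x ())
    simp only [coeff_apply']
    exact this

lemma hasSum_mk (f : ℕ → PS) (hv : ∀ d n : ℕ, d < n → coeff d (f n) = 0) :
    HasSum f (PowerSeries.mk fun d => ∑ n ∈ range (d + 1), coeff d (f n)) := by
  rw [HasSum, tendsto_iff_coeff]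
  intro d
  refine tendsto_const_nhds.congr' ?_
  rw [eventuallyEq_iff_exists_mem]
  refine ⟨{s | range (d+1) ⊆ s}, ?_, fun s hs => ?_⟩
  · exact Filter.mem_atTop (range (d+1))
  · simp only [Set.mem_setOf_eq] at hs
    show coeff d _ = coeff d (∑ b ∈ s, f b)
    rw [map_sum, PowerSeries.coeff_mk]
    exact Finset.sum_subset hs fun n _ hn => hv d n (by
      simp only [Finset.mem_range, not_lt] at hn; omega)

lemma hasProd_mk (f : ℕ → PS) (hv : ∀ d k : ℕ, d < k → W d (f k) 1) :
    HasProd f (PowerSeries.mk fun d => coeff d (∏ k ∈ range (d + 1), f k)) := by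
  rw [HasProd, tendsto_iff_coeff]
  intro d
  refine tendsto_const_nhds.congr' ?_
  rw [eventuallyEq_iff_exists_mem]
  refine ⟨{s | range (d+1) ⊆ s}, Filter.mem_atTop (range (d+1)), fun s hs => ?_⟩
  simp only [Set.mem_setOf_eq] at hs
  show coeff d _ = coeff d (∏ b ∈ s, f b)
  rw [PowerSeries.coeff_mk]
  have : ∏ k ∈ s, f k = (∏ k ∈ range (d+1), f k) * ∏ k ∈ s \ range (d+1), f k := by
    rw [← Finset.prod_union (Finset.disjoint_sdiff)]
    rw [Finset.union_sdiff_of_subset hs]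
  rw [this]
  have h1 : W d (∏ k ∈ s \ range (d+1), f k) 1 := by
    refine W.prod_one _ _ fun k hk => ?_
    rw [Finset.mem_sdiff, Finset.mem_range, not_lt] at hk
    exact hv d k (by omega)
  have h2 : W d ((∏ k ∈ range (d+1), f k) * ∏ k ∈ s \ range (d+1), f k)
      ((∏ k ∈ range (d+1), f k) * 1) := (W.refl d _).mul h1
  rw [mul_one] at h2
  exact (h2 d le_rfl).symm

lemma tsum_W (f : ℕ → PS) (hv : ∀ d n : ℕ, d < n → coeff d (f n) = 0)
    (d N : ℕ) (hN : d < N) : W d (∑' n, f n) (∑ n ∈ range N, f n) := by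
  have h := hasSum_mk f hv
  rw [h.tsum_eq]
  intro i hi
  rw [PowerSeries.coeff_mk, map_sum]
  refine Finset.sum_subset (by intro x hx; simp only [Finset.mem_range] at *; omega)
    fun n _ hn => ?_
  rw [Finset.mem_range, not_lt] at hn
  exact hv i n (by omega)

lemma tprod_W (f : ℕ → PS) (hv : ∀ d k : ℕ, d < k → W d (f k) 1)
    (d N : ℕ) (hN : d < N) : W d (∏' n, f n) (∏ k ∈ range N, f k) := by
  have h := hasProd_mk f hv
  rw [h.tprod_eq]
  intro i hi
  rw [PowerSeries.coeff_mk]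
  have : W i (∏ k ∈ range N, f k) (∏ k ∈ range (i+1), f k) := by
    have hsub : range (i+1) ⊆ range N := by intro x hx; simp only [Finset.mem_range] at *; omega
    have : ∏ k ∈ range N, f k = (∏ k ∈ range (i+1), f k) * ∏ k ∈ range N \ range (i+1), f k := by
      rw [← Finset.prod_union (Finset.disjoint_sdiff), Finset.union_sdiff_of_subset hsub]
    rw [this]
    have h1 : W i (∏ k ∈ range N \ range (i+1), f k) 1 := by
      refine W.prod_one _ _ fun k hk => ?_
      rw [Finset.mem_sdiff, Finset.mem_range, Finset.mem_range, not_lt] at hk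
      exact hv i k (by omega)
    have h2 := (W.refl i (∏ k ∈ range (i+1), f k)).mul h1
    rw [mul_one] at h2
    exact h2
  exact (this i le_rfl).symm

end RRaux
namespace RRaux
open PowerSeries Finset

/-- q-Pochhammer in base `q^b`: `∏_{k<n} (1 - q^{b(k+1)})` -/
noncomputable def pochB (b n : ℕ) : PS := ∏ k ∈ range n, (1 - q ^ (b * (k + 1)))

lemma qPoch_eq_pochB (n : ℕ) : qPoch n = pochB 1 n := by
  unfold qPoch pochB
  exact Finset.prod_congr rfl fun k _ => by rw [one_mul]

lemma cc_one_sub_q_pow (m : ℕ) (hm : 0 < m) : constantCoeff (1 - q ^ m) = 1 := by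
  rw [map_sub, map_one]
  have : constantCoeff (q ^ m) = 0 := by
    rw [q, map_pow, PowerSeries.constantCoeff_X, zero_pow (by omega)]
  rw [this, sub_zero]

lemma cc_pochB (b n : ℕ) (hb : 0 < b) : constantCoeff (pochB b n) = 1 := by
  rw [pochB, map_prod]
  refine Finset.prod_eq_one fun k _ => cc_one_sub_q_pow _ (by positivity)

lemma pochB_ne_zero (b n : ℕ) (hb : 0 < b) : pochB b n ≠ 0 := fun h => by
  have := cc_pochB b n hb; rw [h, map_zero] at this; exact one_ne_zero this.symm

lemma pochB_succ (b n : ℕ) : pochB b (n + 1) = pochB b n * (1 - q ^ (b * (n + 1))) :=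
  Finset.prod_range_succ _ _

/-- tail product: pochB b N = pochB b n * (tail) for n ≤ N -/
lemma pochB_split (b n N : ℕ) (h : n ≤ N) :
    pochB b N = pochB b n * ∏ k ∈ Finset.Ico n N, (1 - q ^ (b * (k + 1))) := by
  rw [pochB, pochB, ← Finset.prod_range_mul_prod_Ico _ h]

lemma W_pochB_tail {d b n N : ℕ} (hb : 0 < b) (h : n ≤ N) (hd : d ≤ n) :
    W d (∏ k ∈ Finset.Ico n N, (1 - q ^ (b * (k + 1)))) 1 := by
  refine W.prod_one _ _ fun k hk => ?_
  rw [Finset.mem_Ico] at hk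
  refine W_one_sub_q_pow ?_
  have : k + 1 ≤ b * (k + 1) := Nat.le_mul_of_pos_left _ hb
  omega

lemma W_pochB {d b n N : ℕ} (hb : 0 < b) (h : n ≤ N) (hd : d ≤ n) :
    W d (pochB b N) (pochB b n) := by
  rw [pochB_split b n N h]
  have h2 := (W.refl d (pochB b n)).mul (W_pochB_tail hb h hd)
  rw [mul_one] at h2
  exact h2

/-- Gaussian binomial in base `q^b` -/
noncomputable def binB (b m k : ℕ) : PS :=
  if k ≤ m then pochB b m * (pochB b k * pochB b (m - k))⁻¹ else 0

lemma qBinom_eq_binB (m k : ℕ) : qBinom m k = binB 1 m k := by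
  rw [qBinom, binB, qPoch_eq_pochB, qPoch_eq_pochB, qPoch_eq_pochB]

lemma binB_mul_poch (b m k : ℕ) (hb : 0 < b) (h : k ≤ m) :
    binB b m k * (pochB b k * pochB b (m - k)) = pochB b m := by
  rw [binB, if_pos h, mul_assoc]
  have hcc : constantCoeff (pochB b k * pochB b (m - k)) ≠ 0 := by
    rw [map_mul, cc_pochB _ _ hb, cc_pochB _ _ hb, one_mul]; exact one_ne_zero
  rw [mul_comm (pochB b k * pochB b (m - k))⁻¹, PowerSeries.mul_inv_cancel _ hcc, mul_one]

lemma binB_zero_right (b m : ℕ) (hb : 0 < b) : binB b m 0 = 1 := by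
  rw [binB, if_pos (Nat.zero_le m)]
  have : pochB b 0 = 1 := rfl
  rw [this, one_mul, Nat.sub_zero]
  exact PowerSeries.mul_inv_cancel _ (by rw [cc_pochB _ _ hb]; exact one_ne_zero)

lemma binB_self (b m : ℕ) (hb : 0 < b) : binB b m m = 1 := by
  rw [binB, if_pos le_rfl, Nat.sub_self]
  have : pochB b 0 = 1 := rfl
  rw [this, mul_one]
  exact PowerSeries.mul_inv_cancel _ (by rw [cc_pochB _ _ hb]; exact one_ne_zero)

lemma binB_of_gt (b m k : ℕ) (h : m < k) : binB b m k = 0 := by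
  rw [binB, if_neg (by omega)]

/-- Pascal A in ℕ form: [m+1, k+1] = [m, k+1] + q^{b(m-k)} [m, k]  (for k ≤ m) -/
lemma binB_pascalA (b m k : ℕ) (hb : 0 < b) (h : k ≤ m) :
    binB b (m + 1) (k + 1) = binB b m (k + 1) + q ^ (b * (m - k)) * binB b m k := by
  rcases Nat.lt_or_ge k m with hlt | hge
  · -- main case k + 1 ≤ m
    have h1 : k + 1 ≤ m := hlt
    have D_ne : (pochB b (k+1) * pochB b (m - k)) ≠ 0 := by
      intro hz
      rcases mul_eq_zero.mp hz with h' | h' <;> exact pochB_ne_zero _ _ hb h'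
    apply mul_right_cancel₀ D_ne
    rw [add_mul]
    have e1 : binB b (m+1) (k+1) * (pochB b (k+1) * pochB b (m - k)) = pochB b (m+1) := by
      have := binB_mul_poch b (m+1) (k+1) hb (by omega)
      rwa [show m + 1 - (k+1) = m - k by omega] at this
    rw [e1]
    have e2 : binB b m (k+1) * (pochB b (k+1) * pochB b (m - k)) =
        pochB b m * (1 - q ^ (b * (m - k))) := by
      have hsplit : pochB b (m - k) = pochB b (m - (k+1)) * (1 - q ^ (b * (m - k))) := by
        have : m - k = (m - (k+1)) + 1 := by omega
        rw [this, pochB_succ]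
      rw [hsplit, show binB b m (k+1) * (pochB b (k+1) * (pochB b (m - (k+1)) * (1 - q ^ (b * (m - k))))) = (binB b m (k+1) * (pochB b (k+1) * pochB b (m - (k+1)))) * (1 - q ^ (b * (m - k))) by ring,
          binB_mul_poch b m (k+1) hb h1]
    have e3 : q ^ (b * (m - k)) * binB b m k * (pochB b (k+1) * pochB b (m - k)) =
        pochB b m * (q ^ (b * (m - k)) * (1 - q ^ (b * (k+1)))) := by
      have hsplit : pochB b (k+1) = pochB b k * (1 - q ^ (b * (k+1))) := pochB_succ b k
      rw [hsplit, show q ^ (b * (m - k)) * binB b m k * (pochB b k * (1 - q ^ (b * (k + 1))) * pochB b (m - k)) = (binB b m k * (pochB b k * pochB b (m - k))) * (q ^ (b * (m - k)) * (1 - q ^ (b * (k+1)))) by ring,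
          binB_mul_poch b m k hb (by omega)]
    rw [e2, e3]
    have e4 : pochB b (m+1) = pochB b m * (1 - q ^ (b * (m+1))) := pochB_succ b m
    have e5 : q ^ (b * (m - k)) * q ^ (b * (k+1)) = q ^ (b * (m + 1)) := by
      rw [← pow_add, ← Nat.mul_add]
      congr 2
      omega
    rw [e4, ← mul_add, show (1 - q ^ (b * (m - k))) + q ^ (b * (m - k)) * (1 - q ^ (b * (k+1))) = 1 - q ^ (b * (m - k)) * q ^ (b * (k+1)) by ring, e5]
  · -- k = m
    have hkm : k = m := le_antisymm h hge
    subst hkm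
    rw [binB_self _ _ hb, binB_of_gt _ _ _ (by omega), Nat.sub_self, Nat.mul_zero, pow_zero,
      binB_self _ _ hb]
    ring

/-- Pascal B in ℕ form: [m+1, k+1] = q^{b(k+1)} [m, k+1] + [m, k]  (for k ≤ m) -/
lemma binB_pascalB (b m k : ℕ) (hb : 0 < b) (h : k ≤ m) :
    binB b (m + 1) (k + 1) = q ^ (b * (k + 1)) * binB b m (k + 1) + binB b m k := by
  rcases Nat.lt_or_ge k m with hlt | hge
  · have h1 : k + 1 ≤ m := hlt
    have D_ne : (pochB b (k+1) * pochB b (m - k)) ≠ 0 := by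
      intro hz
      rcases mul_eq_zero.mp hz with h' | h' <;> exact pochB_ne_zero _ _ hb h'
    apply mul_right_cancel₀ D_ne
    rw [add_mul]
    have e1 : binB b (m+1) (k+1) * (pochB b (k+1) * pochB b (m - k)) = pochB b (m+1) := by
      have := binB_mul_poch b (m+1) (k+1) hb (by omega)
      rwa [show m + 1 - (k+1) = m - k by omega] at this
    rw [e1]
    have e2 : q ^ (b * (k + 1)) * binB b m (k+1) * (pochB b (k+1) * pochB b (m - k)) =
        pochB b m * (q ^ (b * (k + 1)) * (1 - q ^ (b * (m - k)))) := by
      have hsplit : pochB b (m - k) = pochB b (m - (k+1)) * (1 - q ^ (b * (m - k))) := by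
        have : m - k = (m - (k+1)) + 1 := by omega
        rw [this, pochB_succ]
      rw [hsplit, show q ^ (b * (k + 1)) * binB b m (k+1) * (pochB b (k+1) * (pochB b (m - (k+1)) * (1 - q ^ (b * (m - k))))) = (binB b m (k+1) * (pochB b (k+1) * pochB b (m - (k+1)))) * (q ^ (b * (k + 1)) * (1 - q ^ (b * (m - k)))) by ring,
          binB_mul_poch b m (k+1) hb h1]
    have e3 : binB b m k * (pochB b (k+1) * pochB b (m - k)) =
        pochB b m * (1 - q ^ (b * (k+1))) := by
      have hsplit : pochB b (k+1) = pochB b k * (1 - q ^ (b * (k+1))) := pochB_succ b k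
      rw [hsplit, show binB b m k * (pochB b k * (1 - q ^ (b * (k + 1))) * pochB b (m - k)) = (binB b m k * (pochB b k * pochB b (m - k))) * (1 - q ^ (b * (k+1))) by ring,
          binB_mul_poch b m k hb (by omega)]
    rw [e2, e3]
    have e4 : pochB b (m+1) = pochB b m * (1 - q ^ (b * (m+1))) := pochB_succ b m
    have e5 : q ^ (b * (k+1)) * q ^ (b * (m - k)) = q ^ (b * (m + 1)) := by
      rw [← pow_add, ← Nat.mul_add]
      congr 2
      omega
    rw [e4, ← mul_add, show q ^ (b * (k + 1)) * (1 - q ^ (b * (m - k))) + (1 - q ^ (b * (k+1))) = 1 - q ^ (b * (k+1)) * q ^ (b * (m - k)) by ring, e5]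
  · have hkm : k = m := le_antisymm h hge
    subst hkm
    rw [binB_self _ _ hb, binB_of_gt _ _ _ (by omega), binB_self _ _ hb]
    ring

end RRaux
namespace RRaux
open PowerSeries Finset

/-- `q^z` for integer `z` (junk `q^0` for negatives) -/
noncomputable def Qz (z : ℤ) : PS := q ^ z.toNat

lemma Qz_add {a b : ℤ} (ha : 0 ≤ a) (hb : 0 ≤ b) : Qz (a + b) = Qz a * Qz b := by
  rw [Qz, Qz, Qz, ← pow_add, Int.toNat_add ha hb]

lemma Qz_ofNat (n : ℕ) : Qz (n : ℤ) = q ^ n := by rw [Qz, Int.toNat_natCast]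

lemma Qz_zero : Qz 0 = 1 := by rw [Qz, Int.toNat_zero, pow_zero]

lemma W_Qz_mul_zero {d : ℕ} {e : ℤ} (f : PS) (h : (d : ℤ) < e) : W d (Qz e * f) 0 :=
  W_q_pow_mul_zero f (by omega)

lemma W_Qz_zero {d : ℕ} {e : ℤ} (h : (d : ℤ) < e) : W d (Qz e) 0 := by
  have := W_Qz_mul_zero (d := d) (e := e) 1 h
  rwa [mul_one] at this

/-- Gaussian binomial with integer arguments -/
noncomputable def Czz (b : ℕ) (m r : ℤ) : PS :=
  if 0 ≤ m ∧ 0 ≤ r then binB b m.toNat r.toNat else 0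

lemma Czz_eq_zero {b : ℕ} {m r : ℤ} (h : r < 0 ∨ m < r) : Czz b m r = 0 := by
  rcases h with h | h
  · rw [Czz, if_neg (by omega)]
  · rcases le_or_gt 0 r with hr | hr
    · rcases le_or_gt 0 m with hm | hm
      · rw [Czz, if_pos ⟨hm, hr⟩, binB_of_gt _ _ _ (by omega)]
      · rw [Czz, if_neg (by omega)]
    · rw [Czz, if_neg (by omega)]

lemma Czz_zero_right {b : ℕ} {m : ℤ} (hm : 0 ≤ m) (hb : 0 < b) : Czz b m 0 = 1 := by
  rw [Czz, if_pos ⟨hm, le_rfl⟩, Int.toNat_zero, binB_zero_right _ _ hb]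

lemma Czz_pascalA {b : ℕ} (hb : 0 < b) {m r : ℤ} (h : 1 ≤ m ∨ 1 ≤ r) :
    Czz b m r = Czz b (m - 1) r + Qz (b * (m - r)) * Czz b (m - 1) (r - 1) := by
  rcases lt_trichotomy r 0 with hr | hr | hr
  · rw [Czz_eq_zero (Or.inl hr), Czz_eq_zero (Or.inl hr), Czz_eq_zero (Or.inl (by omega))]
    ring
  · subst hr
    have hm : 1 ≤ m := by omega
    rw [Czz_zero_right (by omega) hb, Czz_zero_right (by omega) hb,
      Czz_eq_zero (Or.inl (by omega))]
    ring
  · -- 1 ≤ r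
    rcases le_or_gt r m with hrm | hrm
    · -- 0 ≤ r ≤ m : real Pascal
      have hm : 1 ≤ m := by omega
      obtain ⟨M, hM⟩ : ∃ M : ℕ, m = (M : ℤ) + 1 := ⟨(m - 1).toNat, by omega⟩
      obtain ⟨K, hK⟩ : ∃ K : ℕ, r = (K : ℤ) + 1 := ⟨(r - 1).toNat, by omega⟩
      subst hM; subst hK
      have hKM : K ≤ M := by omega
      rw [Czz, if_pos ⟨by omega, by omega⟩, Czz, if_pos ⟨by omega, by omega⟩,
        Czz, if_pos ⟨by omega, by omega⟩]
      rw [show ((M : ℤ) + 1).toNat = M + 1 by omega, show ((K : ℤ) + 1).toNat = K + 1 by omega,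
        show ((M : ℤ) + 1 - 1).toNat = M by omega, show ((K : ℤ) + 1 - 1).toNat = K by omega]
      have hQ : Qz ((b : ℤ) * ((M:ℤ) + 1 - ((K:ℤ)+1))) = q ^ (b * (M - K)) := by
        rw [show (b : ℤ) * ((M:ℤ) + 1 - ((K:ℤ)+1)) = ((b * (M - K) : ℕ) : ℤ) by
          push_cast [Nat.cast_sub hKM]; ring, Qz_ofNat]
      rw [binB_pascalA b M K hb hKM, hQ]
    · -- r > m : everything vanishes
      rw [Czz_eq_zero (Or.inr hrm), Czz_eq_zero (Or.inr (by omega)),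
        Czz_eq_zero (Or.inr (by omega))]
      ring

lemma Czz_pascalB {b : ℕ} (hb : 0 < b) {m r : ℤ} (h : 1 ≤ m ∨ 1 ≤ r) :
    Czz b m r = Qz (b * r) * Czz b (m - 1) r + Czz b (m - 1) (r - 1) := by
  rcases lt_trichotomy r 0 with hr | hr | hr
  · rw [Czz_eq_zero (Or.inl hr), Czz_eq_zero (Or.inl hr), Czz_eq_zero (Or.inl (by omega))]
    ring
  · subst hr
    have hm : 1 ≤ m := by omega
    rw [Czz_zero_right (by omega) hb, Czz_zero_right (by omega) hb,
      Czz_eq_zero (Or.inl (by omega)), mul_zero, Qz_zero]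
    ring
  · rcases le_or_gt r m with hrm | hrm
    · have hm : 1 ≤ m := by omega
      obtain ⟨M, hM⟩ : ∃ M : ℕ, m = (M : ℤ) + 1 := ⟨(m - 1).toNat, by omega⟩
      obtain ⟨K, hK⟩ : ∃ K : ℕ, r = (K : ℤ) + 1 := ⟨(r - 1).toNat, by omega⟩
      subst hM; subst hK
      have hKM : K ≤ M := by omega
      rw [Czz, if_pos ⟨by omega, by omega⟩, Czz, if_pos ⟨by omega, by omega⟩,
        Czz, if_pos ⟨by omega, by omega⟩]
      rw [show ((M : ℤ) + 1).toNat = M + 1 by omega, show ((K : ℤ) + 1).toNat = K + 1 by omega,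
        show ((M : ℤ) + 1 - 1).toNat = M by omega, show ((K : ℤ) + 1 - 1).toNat = K by omega]
      have hQ : Qz ((b : ℤ) * ((K:ℤ) + 1)) = q ^ (b * (K + 1)) := by
        rw [show (b : ℤ) * ((K:ℤ) + 1) = ((b * (K + 1) : ℕ) : ℤ) by push_cast; ring, Qz_ofNat]
      rw [binB_pascalB b M K hb hKM, hQ]
    · rw [Czz_eq_zero (Or.inr hrm), Czz_eq_zero (Or.inr (by omega)),
        Czz_eq_zero (Or.inr (by omega))]
      ring

/-- a deep Gaussian binomial looks like `1/(q^b;q^b)_r` -/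
lemma Czz_approx1 {b d : ℕ} (hb : 0 < b) {m r : ℤ} (hr0 : 0 ≤ r) (hm : r + d ≤ m) :
    W d (Czz b m r) ((pochB b r.toNat)⁻¹) := by
  have hm0 : 0 ≤ m := by omega
  set M := m.toNat with hMdef
  set K := r.toNat with hKdef
  have hKM : K ≤ M := by omega
  rw [Czz, if_pos ⟨hm0, hr0⟩]
  -- step 1: W d (binB b M K) (pochB b K)⁻¹
  have key : binB b M K * pochB b K = ∏ k ∈ Finset.Ico (M - K) M, (1 - q ^ (b * (k + 1))) := by
    apply mul_right_cancel₀ (pochB_ne_zero b (M - K) hb)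
    rw [mul_assoc, binB_mul_poch b M K hb hKM, pochB_split b (M - K) M (by omega)]
    ring
  have h1 : W d (binB b M K) ((pochB b K)⁻¹) := by
    refine W.eq_inv ?_ (by rw [cc_pochB _ _ hb]; exact one_ne_zero)
    rw [key]
    exact W_pochB_tail hb (by omega) (by omega)
  exact h1

/-- main approximation: a deep Gaussian binomial looks like `1/(q^b;q^b)_{d+1}` -/
lemma Czz_approx {b d : ℕ} (hb : 0 < b) {m r : ℤ} (hr : (d : ℤ) + 1 ≤ r) (hm : r + d ≤ m) :
    W d (Czz b m r) ((pochB b (d + 1))⁻¹) := by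
  refine (Czz_approx1 hb (by omega) hm).trans ?_
  refine W.inv ?_ (by rw [cc_pochB _ _ hb]; exact one_ne_zero)
  exact W_pochB hb (by omega) (by omega)

/-- index shift for sums over Icc in ℤ -/
lemma sum_Icc_shift (f : ℤ → PS) (a b c : ℤ) :
    ∑ k ∈ Finset.Icc a b, f k = ∑ k ∈ Finset.Icc (a + c) (b + c), f (k - c) := by
  rw [← Finset.map_add_right_Icc a b c]
  rw [Finset.sum_map]
  refine Finset.sum_congr rfl fun k _ => ?_
  simp [addRightEmbedding]

/-- trim a sum over a bigger Icc to a smaller one when outer terms vanish -/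
lemma sum_Icc_trim (f : ℤ → PS) {a b a' b' : ℤ} (h1 : a' ≤ a) (h2 : b ≤ b')
    (hz : ∀ k, a' ≤ k → k ≤ b' → ¬(a ≤ k ∧ k ≤ b) → f k = 0) :
    ∑ k ∈ Finset.Icc a' b', f k = ∑ k ∈ Finset.Icc a b, f k := by
  refine (Finset.sum_subset (Finset.Icc_subset_Icc h1 h2) fun k hk hk2 => ?_).symm
  rw [Finset.mem_Icc] at hk
  rw [Finset.mem_Icc] at hk2
  exact hz k hk.1 hk.2 hk2

/-- the theta exponent: σ(k) = k(5k+3)/2 -/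
def sg (k : ℤ) : ℤ := k * (5 * k + 3) / 2

lemma two_sg (k : ℤ) : 2 * sg k = k * (5 * k + 3) := by
  have h : (2 : ℤ) ∣ k * (5 * k + 3) := by
    rcases Int.even_or_odd k with ⟨a, ha⟩ | ⟨a, ha⟩
    · exact ⟨a * (5 * k + 3), by rw [ha]; ring⟩
    · exact ⟨k * (5 * a + 4), by rw [ha]; ring⟩
  rw [sg, Int.mul_ediv_cancel' h]

lemma sg_nonneg (k : ℤ) : 0 ≤ sg k := by
  have h := two_sg k
  rcases le_or_gt 0 k with hk | hk
  · nlinarith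
  · nlinarith

lemma sg_succ (k : ℤ) : sg (k + 1) = sg k + (5 * k + 4) := by
  have h1 := two_sg (k + 1)
  have h2 := two_sg k
  nlinarith [h1, h2]

lemma sg_pred (k : ℤ) : sg (k - 1) = sg k - (5 * k - 1) := by
  have h1 := two_sg (k - 1)
  have h2 := two_sg k
  nlinarith [h1, h2]

lemma sg_even (i : ℤ) : sg (2 * i) = 10 * i ^ 2 + 3 * i := by
  have h := two_sg (2 * i); nlinarith [h]

lemma sg_odd (i : ℤ) : sg (2 * i + 1) = 10 * i ^ 2 + 13 * i + 4 := by
  have h := two_sg (2 * i + 1); nlinarith [h]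

lemma sg_big {d : ℕ} {k : ℤ} (h : (d : ℤ) < k ∨ k < -(d : ℤ)) : (d : ℤ) < sg k := by
  have h2 := two_sg k
  have hd : (0:ℤ) ≤ d := Int.natCast_nonneg d
  rcases h with h | h
  · nlinarith
  · nlinarith

/-- sign (-1)^k as a power series scalar -/
noncomputable def eps (k : ℤ) : PS := if Even k then 1 else -1

lemma eps_succ (k : ℤ) : eps (k + 1) = -eps k := by
  by_cases h : Even k <;> simp [eps, Int.even_add_one, h]

lemma eps_pred (k : ℤ) : eps (k - 1) = -eps k := by
  have := eps_succ (k - 1)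
  rw [sub_add_cancel] at this
  rw [this]; ring

lemma eps_even (i : ℤ) : eps (2 * i) = 1 := by rw [eps, if_pos ⟨i, by ring⟩]

lemma eps_odd (i : ℤ) : eps (2 * i + 1) = -1 := by
  rw [eps, if_neg]
  rintro ⟨a, ha⟩
  omega

end RRaux
namespace RRaux
open PowerSeries Finset

/-- theta term -/
noncomputable def thA (k : ℤ) : PS := eps k * Qz (sg k)

lemma sum_shift_up (f : ℤ → PS) {a b : ℤ} (ha : f a = 0) (hb : f (b + 1) = 0) :
    ∑ k ∈ Finset.Icc a b, f (k + 1) = ∑ k ∈ Finset.Icc a b, f k := by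
  have h1 : ∑ k ∈ Finset.Icc a b, f (k + 1) = ∑ k ∈ Finset.Icc (a+1) (b+1), f k := by
    rw [sum_Icc_shift (fun k => f k) (a+1) (b+1) (-1)]
    simp only [add_neg_cancel_right]
    refine Finset.sum_congr rfl fun k _ => by rw [show k - -1 = k + 1 by ring]
  rw [h1]
  have h2 : ∑ k ∈ Finset.Icc (a+1) (b+1), f k = ∑ k ∈ Finset.Icc a (b+1), f k := by
    refine Finset.sum_subset (Finset.Icc_subset_Icc (by omega) le_rfl) fun k hk hk2 => ?_
    rw [Finset.mem_Icc] at hk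
    rw [Finset.mem_Icc, not_and_or] at hk2
    have : k = a := by omega
    rwa [this]
  have h3 : ∑ k ∈ Finset.Icc a b, f k = ∑ k ∈ Finset.Icc a (b+1), f k := by
    refine Finset.sum_subset (Finset.Icc_subset_Icc le_rfl (by omega)) fun k hk hk2 => ?_
    rw [Finset.mem_Icc] at hk
    rw [Finset.mem_Icc, not_and_or] at hk2
    have : k = b + 1 := by omega
    rwa [this]
  rw [h2, ← h3]

lemma sum_shift_down (f : ℤ → PS) {a b : ℤ} (ha : f (a - 1) = 0) (hb : f b = 0) :
    ∑ k ∈ Finset.Icc a b, f (k - 1) = ∑ k ∈ Finset.Icc a b, f k := by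
  have h1 : ∑ k ∈ Finset.Icc a b, f (k - 1) = ∑ k ∈ Finset.Icc (a-1) (b-1), f k := by
    rw [sum_Icc_shift (fun k => f k) (a-1) (b-1) 1]
    rw [show a - 1 + 1 = a by ring, show b - 1 + 1 = b by ring]
  rw [h1]
  have h2 : ∑ k ∈ Finset.Icc (a-1) (b-1), f k = ∑ k ∈ Finset.Icc (a-1) b, f k := by
    refine Finset.sum_subset (Finset.Icc_subset_Icc le_rfl (by omega)) fun k hk hk2 => ?_
    rw [Finset.mem_Icc] at hk
    rw [Finset.mem_Icc, not_and_or] at hk2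
    have : k = b := by omega
    rwa [this]
  have h3 : ∑ k ∈ Finset.Icc a b, f k = ∑ k ∈ Finset.Icc (a-1) b, f k := by
    refine Finset.sum_subset (Finset.Icc_subset_Icc (by omega) le_rfl) fun k hk hk2 => ?_
    rw [Finset.mem_Icc] at hk
    rw [Finset.mem_Icc, not_and_or] at hk2
    have : k = a - 1 := by omega
    rwa [this]
  rw [h2, ← h3]

/-- finite Jacobi sum -/
noncomputable def Sj (n : ℕ) : PS :=
  ∑ k ∈ Finset.Icc (-(n : ℤ) - 2) ((n : ℤ) + 2), thA k * Czz 5 (2 * (n : ℤ)) ((n : ℤ) + k)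

lemma Sj_zero : Sj 0 = 1 := by
  rw [Sj]
  push_cast
  rw [Finset.sum_eq_single_of_mem 0 (by rw [Finset.mem_Icc]; omega)]
  · have h0 : sg 0 = 0 := by have := two_sg 0; omega
    rw [thA, h0, Qz_zero, eps, if_pos Even.zero, mul_one, one_mul, zero_add,
      Czz_zero_right (by norm_num) (by norm_num)]
  · intro k hk hne
    rcases lt_trichotomy k 0 with h | h | h
    · rw [zero_add, Czz_eq_zero (Or.inl (by omega)), mul_zero]
    · exact absurd h hne
    · rw [zero_add, Czz_eq_zero (Or.inr (by omega)), mul_zero]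

lemma thA_up (n : ℕ) {k : ℤ} (hk : k ≤ (n:ℤ)) :
    thA (k + 1) * Qz (5 * ((n:ℤ) - k)) = -(q ^ (5 * n + 4)) * thA k := by
  calc thA (k + 1) * Qz (5 * ((n:ℤ) - k))
      = (-eps k) * (Qz (sg (k+1)) * Qz (5 * ((n:ℤ) - k))) := by rw [thA, eps_succ]; ring
    _ = (-eps k) * Qz (sg (k+1) + 5 * ((n:ℤ) - k)) := by
        rw [Qz_add (sg_nonneg _) (by omega)]
    _ = (-eps k) * Qz (sg k + (5 * (n:ℤ) + 4)) := by
        rw [show sg (k+1) + 5 * ((n:ℤ) - k) = sg k + (5 * (n:ℤ) + 4) by rw [sg_succ]; ring]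
    _ = (-eps k) * (Qz (sg k) * Qz (5 * (n:ℤ) + 4)) := by
        rw [Qz_add (sg_nonneg _) (by omega)]
    _ = -(q ^ (5 * n + 4)) * thA k := by
        rw [show (5 * (n:ℤ) + 4) = ((5 * n + 4 : ℕ) : ℤ) by push_cast; ring, Qz_ofNat, thA]
        ring

lemma thA_down (n : ℕ) {k : ℤ} (hk : -(n:ℤ) ≤ k) :
    thA (k - 1) * Qz (5 * ((n:ℤ) + k)) = -(q ^ (5 * n + 1)) * thA k := by
  calc thA (k - 1) * Qz (5 * ((n:ℤ) + k))
      = (-eps k) * (Qz (sg (k-1)) * Qz (5 * ((n:ℤ) + k))) := by rw [thA, eps_pred]; ring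
    _ = (-eps k) * Qz (sg (k-1) + 5 * ((n:ℤ) + k)) := by
        rw [Qz_add (sg_nonneg _) (by omega)]
    _ = (-eps k) * Qz (sg k + (5 * (n:ℤ) + 1)) := by
        rw [show sg (k-1) + 5 * ((n:ℤ) + k) = sg k + (5 * (n:ℤ) + 1) by rw [sg_pred]; ring]
    _ = (-eps k) * (Qz (sg k) * Qz (5 * (n:ℤ) + 1)) := by
        rw [Qz_add (sg_nonneg _) (by omega)]
    _ = -(q ^ (5 * n + 1)) * thA k := by
        rw [show (5 * (n:ℤ) + 1) = ((5 * n + 1 : ℕ) : ℤ) by push_cast; ring, Qz_ofNat, thA]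
        ring

end RRaux
namespace RRaux
open PowerSeries Finset

lemma Sj_succ (n : ℕ) :
    Sj (n + 1) = Sj n * ((1 - q ^ (5 * n + 1)) * (1 - q ^ (5 * n + 4))) := by
  have hb5 : (0:ℕ) < 5 := by norm_num
  have hW : Sj (n + 1) = ∑ k ∈ Finset.Icc (-(n:ℤ) - 3) ((n:ℤ) + 3),
      thA k * Czz 5 (2 * (n:ℤ) + 2) ((n:ℤ) + 1 + k) := by
    rw [Sj]
    rw [show (-(((n:ℕ)+1 : ℕ):ℤ) - 2) = -(n:ℤ) - 3 by push_cast; ring,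
        show ((((n:ℕ)+1 : ℕ):ℤ) + 2) = (n:ℤ) + 3 by push_cast; ring]
    refine Finset.sum_congr rfl fun k _ => ?_
    rw [show (2 * (((n:ℕ)+1 : ℕ):ℤ)) = 2 * (n:ℤ) + 2 by push_cast; ring,
        show ((((n:ℕ)+1:ℕ):ℤ) + k) = (n:ℤ) + 1 + k by push_cast; ring]
  have step1 : Sj (n+1) = (1 - q ^ (5*n+4)) *
      ∑ k ∈ Finset.Icc (-(n:ℤ) - 3) ((n:ℤ) + 3),
        thA k * Czz 5 (2*(n:ℤ)+1) ((n:ℤ)+1+k) := by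
    rw [hW]
    have pas : ∀ k ∈ Finset.Icc (-(n:ℤ) - 3) ((n:ℤ) + 3),
        thA k * Czz 5 (2*(n:ℤ)+2) ((n:ℤ)+1+k)
          = thA k * Czz 5 (2*(n:ℤ)+1) ((n:ℤ)+1+k)
            + thA k * (Qz (5 * ((n:ℤ)+1-k)) * Czz 5 (2*(n:ℤ)+1) ((n:ℤ)+k)) := by
      intro k _
      rw [Czz_pascalA (b:=5) hb5 (m := 2*(n:ℤ)+2) (r := (n:ℤ)+1+k) (Or.inl (by omega))]
      push_cast
      rw [show (2*(n:ℤ)+2) - 1 = 2*(n:ℤ)+1 by ring,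
          show ((n:ℤ)+1+k) - 1 = (n:ℤ)+k by ring,
          show (5:ℤ) * ((2*(n:ℤ)+2) - ((n:ℤ)+1+k)) = 5 * ((n:ℤ)+1-k) by ring]
      ring
    rw [Finset.sum_congr rfl pas, Finset.sum_add_distrib]
    have hshift : ∑ k ∈ Finset.Icc (-(n:ℤ) - 3) ((n:ℤ) + 3),
        thA k * (Qz (5 * ((n:ℤ)+1-k)) * Czz 5 (2*(n:ℤ)+1) ((n:ℤ)+k))
        = ∑ k ∈ Finset.Icc (-(n:ℤ) - 3) ((n:ℤ) + 3),
          thA (k+1) * (Qz (5 * ((n:ℤ)+1-(k+1))) * Czz 5 (2*(n:ℤ)+1) ((n:ℤ)+(k+1))) := by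
      refine (sum_shift_up
        (fun k => thA k * (Qz (5 * ((n:ℤ)+1-k)) * Czz 5 (2*(n:ℤ)+1) ((n:ℤ)+k))) ?_ ?_).symm
      · beta_reduce
        rw [Czz_eq_zero (Or.inl (by omega)), mul_zero, mul_zero]
      · beta_reduce
        rw [Czz_eq_zero (Or.inr (by omega)), mul_zero, mul_zero]
    rw [hshift]
    have per : ∀ k ∈ Finset.Icc (-(n:ℤ) - 3) ((n:ℤ) + 3),
        thA (k+1) * (Qz (5 * ((n:ℤ)+1-(k+1))) * Czz 5 (2*(n:ℤ)+1) ((n:ℤ)+(k+1)))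
        = -(q ^ (5*n+4)) * (thA k * Czz 5 (2*(n:ℤ)+1) ((n:ℤ)+1+k)) := by
      intro k _
      rw [show (n:ℤ)+1-(k+1) = (n:ℤ)-k by ring, show (n:ℤ)+(k+1) = (n:ℤ)+1+k by ring]
      by_cases hk : k ≤ (n:ℤ)
      · rw [← mul_assoc, thA_up n hk]
        ring
      · rw [Czz_eq_zero (Or.inr (by omega))]
        ring
    rw [Finset.sum_congr rfl per, ← Finset.mul_sum]
    ring
  have step2 : ∑ k ∈ Finset.Icc (-(n:ℤ) - 3) ((n:ℤ) + 3),
      thA k * Czz 5 (2*(n:ℤ)+1) ((n:ℤ)+1+k) = (1 - q ^ (5*n+1)) * Sj n := by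
    have pas : ∀ k ∈ Finset.Icc (-(n:ℤ) - 3) ((n:ℤ) + 3),
        thA k * Czz 5 (2*(n:ℤ)+1) ((n:ℤ)+1+k)
          = thA k * (Qz (5 * ((n:ℤ)+1+k)) * Czz 5 (2*(n:ℤ)) ((n:ℤ)+1+k))
            + thA k * Czz 5 (2*(n:ℤ)) ((n:ℤ)+k) := by
      intro k _
      rw [Czz_pascalB (b:=5) hb5 (m := 2*(n:ℤ)+1) (r := (n:ℤ)+1+k) (Or.inl (by omega))]
      push_cast
      rw [show (2*(n:ℤ)+1) - 1 = 2*(n:ℤ) by ring,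
          show ((n:ℤ)+1+k) - 1 = (n:ℤ)+k by ring,
          show (5:ℤ) * ((n:ℤ)+1+k) = 5 * ((n:ℤ)+1+k) from rfl]
      ring
    rw [Finset.sum_congr rfl pas, Finset.sum_add_distrib]
    have hU2 : ∑ k ∈ Finset.Icc (-(n:ℤ) - 3) ((n:ℤ) + 3),
        thA k * Czz 5 (2*(n:ℤ)) ((n:ℤ)+k) = Sj n := by
      rw [Sj]
      refine sum_Icc_trim _ (by omega) (by omega) fun k h1 h2 h3 => ?_
      have : k = -(n:ℤ) - 3 ∨ k = (n:ℤ) + 3 := by omega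
      rcases this with h | h <;> subst h
      · rw [Czz_eq_zero (Or.inl (by omega)), mul_zero]
      · rw [Czz_eq_zero (Or.inr (by omega)), mul_zero]
    have hshift : ∑ k ∈ Finset.Icc (-(n:ℤ) - 3) ((n:ℤ) + 3),
        thA k * (Qz (5 * ((n:ℤ)+1+k)) * Czz 5 (2*(n:ℤ)) ((n:ℤ)+1+k))
        = ∑ k ∈ Finset.Icc (-(n:ℤ) - 3) ((n:ℤ) + 3),
          thA (k-1) * (Qz (5 * ((n:ℤ)+1+(k-1))) * Czz 5 (2*(n:ℤ)) ((n:ℤ)+1+(k-1))) := by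
      refine (sum_shift_down
        (fun k => thA k * (Qz (5 * ((n:ℤ)+1+k)) * Czz 5 (2*(n:ℤ)) ((n:ℤ)+1+k))) ?_ ?_).symm
      · beta_reduce
        rw [Czz_eq_zero (Or.inl (by omega)), mul_zero, mul_zero]
      · beta_reduce
        rw [Czz_eq_zero (Or.inr (by omega)), mul_zero, mul_zero]
    rw [hshift]
    have per : ∀ k ∈ Finset.Icc (-(n:ℤ) - 3) ((n:ℤ) + 3),
        thA (k-1) * (Qz (5 * ((n:ℤ)+1+(k-1))) * Czz 5 (2*(n:ℤ)) ((n:ℤ)+1+(k-1)))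
        = -(q ^ (5*n+1)) * (thA k * Czz 5 (2*(n:ℤ)) ((n:ℤ)+k)) := by
      intro k _
      rw [show (n:ℤ)+1+(k-1) = (n:ℤ)+k by ring]
      by_cases hk : -(n:ℤ) ≤ k
      · rw [← mul_assoc, thA_down n hk]
        ring
      · rw [Czz_eq_zero (Or.inl (by omega))]
        ring
    rw [Finset.sum_congr rfl per, ← Finset.mul_sum, hU2]
    ring
  rw [step1, step2]
  ring

/-- the finite JTP -/
lemma jtp (n : ℕ) :
    Sj n = ∏ j ∈ Finset.range n, ((1 - q ^ (5*j+1)) * (1 - q ^ (5*j+4))) := by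
  induction n with
  | zero => rw [Sj_zero, Finset.range_zero, Finset.prod_empty]
  | succ n ih => rw [Sj_succ, ih, Finset.prod_range_succ]

end RRaux
namespace RRaux
open PowerSeries Finset

/-- Rogers–Ramanujan polynomials (second identity): d₀ = d₁ = 1, dₙ = dₙ₋₁ + qⁿ dₙ₋₂ -/
noncomputable def dd : ℕ → PS
  | 0 => 1
  | 1 => 1
  | (n+2) => dd (n+1) + q^(n+2) * dd n

/-- closed form: ∑ₖ q^{k²+k} [n-k choose k]_q -/
noncomputable def Ff (n : ℕ) : PS :=
  ∑ k ∈ Finset.Icc (0:ℤ) ((n:ℤ)+2), Qz (k^2+k) * Czz 1 ((n:ℤ) - k) k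

lemma Ff_apply_zero : Ff 0 = 1 := by
  rw [Ff]
  rw [Finset.sum_eq_single_of_mem 0 (by rw [Finset.mem_Icc]; omega)]
  · rw [show (0:ℤ)^2 + 0 = 0 by ring, Qz_zero, one_mul, sub_zero,
      show ((0:ℕ):ℤ) = (0:ℤ) by norm_num, Czz_zero_right le_rfl (by norm_num)]
  · intro k hk hne
    rw [Finset.mem_Icc] at hk
    rw [Czz_eq_zero (Or.inr (by omega)), mul_zero]

lemma Ff_apply_one : Ff 1 = 1 := by
  rw [Ff]
  rw [Finset.sum_eq_single_of_mem 0 (by rw [Finset.mem_Icc]; omega)]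
  · rw [show (0:ℤ)^2 + 0 = 0 by ring, Qz_zero, one_mul, sub_zero,
      Czz_zero_right (by norm_num) (by norm_num)]
  · intro k hk hne
    rw [Finset.mem_Icc] at hk
    rw [Czz_eq_zero (Or.inr (by omega)), mul_zero]

lemma Ff_rec (n : ℕ) : Ff (n + 2) = Ff (n + 1) + q^(n+2) * Ff n := by
  have hb1 : (0:ℕ) < 1 := by norm_num
  have hW : Ff (n + 2) = ∑ k ∈ Finset.Icc (0:ℤ) ((n:ℤ)+4),
      Qz (k^2+k) * Czz 1 ((n:ℤ) + 2 - k) k := by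
    rw [Ff, show (((n:ℕ)+2 : ℕ):ℤ) + 2 = (n:ℤ) + 4 by push_cast; ring]
    refine Finset.sum_congr rfl fun k _ => ?_
    rw [show (((n:ℕ)+2 : ℕ):ℤ) - k = (n:ℤ) + 2 - k by push_cast; ring]
  rw [hW]
  have pas : ∀ k ∈ Finset.Icc (0:ℤ) ((n:ℤ)+4),
      Qz (k^2+k) * Czz 1 ((n:ℤ) + 2 - k) k
        = Qz (k^2+k) * Czz 1 ((n:ℤ) + 1 - k) k
          + Qz (k^2+k) * (Qz ((n:ℤ) + 2 - 2*k) * Czz 1 ((n:ℤ) + 1 - k) (k - 1)) := by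
    intro k hk
    rw [Finset.mem_Icc] at hk
    rw [Czz_pascalA (b:=1) hb1 (m := (n:ℤ)+2-k) (r := k) (by omega)]
    push_cast
    rw [show ((n:ℤ)+2-k) - 1 = (n:ℤ)+1-k by ring,
        show (1:ℤ) * ((n:ℤ)+2-k - k) = (n:ℤ)+2-2*k by ring]
    ring
  rw [Finset.sum_congr rfl pas, Finset.sum_add_distrib]
  have hA : ∑ k ∈ Finset.Icc (0:ℤ) ((n:ℤ)+4), Qz (k^2+k) * Czz 1 ((n:ℤ) + 1 - k) k
      = Ff (n+1) := by
    rw [Ff, show (((n:ℕ)+1 : ℕ):ℤ) + 2 = (n:ℤ) + 3 by push_cast; ring]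
    have htrim : ∑ k ∈ Finset.Icc (0:ℤ) ((n:ℤ)+4), Qz (k^2+k) * Czz 1 ((n:ℤ) + 1 - k) k
        = ∑ k ∈ Finset.Icc (0:ℤ) ((n:ℤ)+3), Qz (k^2+k) * Czz 1 ((n:ℤ) + 1 - k) k :=
      sum_Icc_trim _ (le_refl (0:ℤ)) (by omega) (fun k h1 h2 h3 => by
        rw [Czz_eq_zero (Or.inr (by omega)), mul_zero])
    rw [htrim]
    refine Finset.sum_congr rfl fun k _ => ?_
    rw [show (((n:ℕ)+1 : ℕ):ℤ) - k = (n:ℤ) + 1 - k by push_cast; ring]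
  have hshift : ∑ k ∈ Finset.Icc (0:ℤ) ((n:ℤ)+4),
      Qz (k^2+k) * (Qz ((n:ℤ) + 2 - 2*k) * Czz 1 ((n:ℤ) + 1 - k) (k - 1))
      = ∑ k ∈ Finset.Icc (0:ℤ) ((n:ℤ)+4),
        Qz ((k+1)^2+(k+1)) * (Qz ((n:ℤ) - 2*k) * Czz 1 ((n:ℤ) - k) k) := by
    have := (sum_shift_up
      (fun k => Qz (k^2+k) * (Qz ((n:ℤ) + 2 - 2*k) * Czz 1 ((n:ℤ) + 1 - k) (k - 1)))
      (a := (0:ℤ)) (b := (n:ℤ)+4) ?_ ?_).symm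
    · rw [this]
      refine Finset.sum_congr rfl fun k _ => ?_
      beta_reduce
      rw [show (n:ℤ)+2-2*(k+1) = (n:ℤ)-2*k by ring, show (n:ℤ)+1-(k+1) = (n:ℤ)-k by ring,
          show k+1-1 = k by ring]
    · beta_reduce
      rw [Czz_eq_zero (Or.inl (by omega)), mul_zero, mul_zero]
    · beta_reduce
      rw [Czz_eq_zero (Or.inr (by omega)), mul_zero, mul_zero]
  rw [hshift]
  have per : ∀ k ∈ Finset.Icc (0:ℤ) ((n:ℤ)+4),
      Qz ((k+1)^2+(k+1)) * (Qz ((n:ℤ) - 2*k) * Czz 1 ((n:ℤ) - k) k)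
      = q^(n+2) * (Qz (k^2+k) * Czz 1 ((n:ℤ) - k) k) := by
    intro k hk
    rw [Finset.mem_Icc] at hk
    by_cases hcase : 2*k ≤ (n:ℤ)
    · rw [← mul_assoc, ← Qz_add (by nlinarith) (by omega),
        show (k+1)^2+(k+1) + ((n:ℤ) - 2*k) = ((n:ℤ)+2) + (k^2+k) by ring,
        Qz_add (by omega) (by nlinarith),
        show ((n:ℤ)+2) = (((n+2 : ℕ)):ℤ) by push_cast; ring, Qz_ofNat]
      ring
    · rw [Czz_eq_zero (Or.inr (by omega))]
      ring
  rw [Finset.sum_congr rfl per, ← Finset.mul_sum]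
  have hB : ∑ k ∈ Finset.Icc (0:ℤ) ((n:ℤ)+4), Qz (k^2+k) * Czz 1 ((n:ℤ) - k) k = Ff n := by
    rw [Ff]
    exact sum_Icc_trim _ (le_refl (0:ℤ)) (by omega) (fun k h1 h2 h3 => by
      rw [Czz_eq_zero (Or.inr (by omega)), mul_zero])
  rw [hA, hB]

lemma dd_eq_Ff : ∀ n, dd n = Ff n := by
  intro n
  induction n using Nat.twoStepInduction with
  | zero => rw [dd, Ff_apply_zero]
  | one => rw [dd, Ff_apply_one]
  | more n ih1 ih2 => rw [dd, Ff_rec, ih1, ih2]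

end RRaux
namespace RRaux
open PowerSeries Finset

lemma aux1 (i : ℤ) : 0 ≤ 10*i^2+3*i := by
  rcases le_or_gt 0 i with h | h
  · nlinarith
  · have h2 : 0 ≤ (-i) * (-(10*i+3)) := mul_nonneg (by omega) (by omega)
    nlinarith [h2]

lemma aux2 (i : ℤ) : 0 ≤ 10*i^2+13*i+4 := by
  rcases le_or_gt 0 i with h | h
  · nlinarith
  · have h2 : 0 ≤ (-(2*i+1)) * (-(5*i+4)) := mul_nonneg (by omega) (by omega)
    nlinarith [h2]

lemma aux3 (i : ℤ) : 0 ≤ 10*i^2-2*i := by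
  rcases le_or_gt 1 i with h | h
  · nlinarith
  · have h2 : 0 ≤ (-i) * (-(10*i-2)) := mul_nonneg (by omega) (by omega)
    nlinarith [h2]

lemma aux4 (i : ℤ) : 0 ≤ 10*i^2+8*i := by
  rcases le_or_gt 0 i with h | h
  · nlinarith
  · have h2 : 0 ≤ (-i) * (-(10*i+8)) := mul_nonneg (by omega) (by omega)
    nlinarith [h2]

lemma aux5 (i : ℤ) : 0 ≤ 10*i^2-7*i := by
  rcases le_or_gt 1 i with h | h
  · nlinarith
  · have h2 : 0 ≤ (-i) * (-(10*i-7)) := mul_nonneg (by omega) (by omega)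
    nlinarith [h2]

/-- general Schur-sum summand -/
noncomputable def bodyS (L m c : ℤ) (i : ℤ) : PS :=
  Qz (10*i^2+3*i) * Czz 1 L (m - 5*i) - Qz (10*i^2+13*i+4) * Czz 1 L (m - 5*i - c)

lemma bodyS_vanish {L m c i : ℤ} (hm : 0 ≤ m) (hL : L ≤ 2*m+2) (hc0 : 0 ≤ c) (hc3 : L + c ≤ 2*m+4)
    (hi : m+1 ≤ i ∨ i ≤ -(m+1)) : bodyS L m c i = 0 := by
  rcases hi with h | h
  · rw [bodyS, Czz_eq_zero (Or.inl (by omega)), Czz_eq_zero (Or.inl (by omega)),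
      mul_zero, mul_zero, sub_zero]
  · rw [bodyS, Czz_eq_zero (Or.inr (by omega)), Czz_eq_zero (Or.inr (by omega)),
      mul_zero, mul_zero, sub_zero]

lemma bodyS_sum_eq {L m c : ℤ} (hm : 0 ≤ m) (hL : L ≤ 2*m+2) (hc0 : 0 ≤ c) (hc3 : L + c ≤ 2*m+4)
    {A B A' B' : ℤ} (hA : A ≤ -(m+1)) (hB : m+1 ≤ B) (hA' : A' ≤ -(m+1)) (hB' : m+1 ≤ B') :
    ∑ i ∈ Finset.Icc A B, bodyS L m c i = ∑ i ∈ Finset.Icc A' B', bodyS L m c i := by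
  have t1 : ∑ i ∈ Finset.Icc A B, bodyS L m c i
      = ∑ i ∈ Finset.Icc (-(m+1)) (m+1), bodyS L m c i :=
    sum_Icc_trim _ hA hB fun i h1 h2 h3 => bodyS_vanish hm hL hc0 hc3 (by omega)
  have t2 : ∑ i ∈ Finset.Icc A' B', bodyS L m c i
      = ∑ i ∈ Finset.Icc (-(m+1)) (m+1), bodyS L m c i :=
    sum_Icc_trim _ hA' hB' fun i h1 h2 h3 => bodyS_vanish hm hL hc0 hc3 (by omega)
  rw [t1, ← t2]

/-- Schur sum, even: equals d_{2m} -/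
noncomputable def Ee (m : ℕ) : PS :=
  ∑ i ∈ Finset.Icc (-(m:ℤ)-5) ((m:ℤ)+5), bodyS (2*(m:ℤ)+1) (m:ℤ) 3 i

/-- Schur sum, odd: equals d_{2m+1} -/
noncomputable def Eo (m : ℕ) : PS :=
  ∑ i ∈ Finset.Icc (-(m:ℤ)-5) ((m:ℤ)+5), bodyS (2*(m:ℤ)+2) (m:ℤ) 2 i

lemma Ee_zero : Ee 0 = 1 := by
  rw [Ee]
  push_cast
  rw [Finset.sum_eq_single_of_mem 0 (by rw [Finset.mem_Icc]; omega)]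
  · rw [bodyS]
    rw [show (10*(0:ℤ)^2+3*0) = 0 by ring, show (10*(0:ℤ)^2+13*0+4) = 4 by ring,
        show ((0:ℤ) - 5*0) = 0 by ring, show ((0:ℤ) - 3) = -3 by ring]
    rw [Czz_eq_zero (r := -3) (Or.inl (by norm_num)), mul_zero, sub_zero, Qz_zero, one_mul,
      Czz_zero_right (by norm_num) (by norm_num)]
  · intro i hi hne
    rw [Finset.mem_Icc] at hi
    rcases lt_trichotomy i 0 with h | h | h
    · exact bodyS_vanish (by norm_num) (by norm_num) (by norm_num) (by norm_num) (by omega)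
    · exact absurd h hne
    · exact bodyS_vanish (by norm_num) (by norm_num) (by norm_num) (by norm_num) (by omega)

lemma Eo_zero : Eo 0 = 1 := by
  rw [Eo]
  push_cast
  rw [Finset.sum_eq_single_of_mem 0 (by rw [Finset.mem_Icc]; omega)]
  · rw [bodyS]
    rw [show (10*(0:ℤ)^2+3*0) = 0 by ring, show (10*(0:ℤ)^2+13*0+4) = 4 by ring,
        show ((0:ℤ) - 5*0) = 0 by ring, show ((0:ℤ) - 2) = -2 by ring]
    rw [Czz_eq_zero (r := -2) (Or.inl (by norm_num)), mul_zero, sub_zero, Qz_zero, one_mul,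
      Czz_zero_right (by norm_num) (by norm_num)]
  · intro i hi hne
    rw [Finset.mem_Icc] at hi
    rcases lt_trichotomy i 0 with h | h | h
    · exact bodyS_vanish (by norm_num) (by norm_num) (by norm_num) (by norm_num) (by omega)
    · exact absurd h hne
    · exact bodyS_vanish (by norm_num) (by norm_num) (by norm_num) (by norm_num) (by omega)

end RRaux
namespace RRaux
open PowerSeries Finset

lemma Ee_succ (m : ℕ) : Ee (m + 1) = Eo m + q^(2*m+2) * Ee m := by
  have hb1 : (0:ℕ) < 1 := by norm_num
  have hWe : Ee (m + 1) = ∑ i ∈ Finset.Icc (-(m:ℤ)-6) ((m:ℤ)+6),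
      bodyS (2*(m:ℤ)+3) ((m:ℤ)+1) 3 i := by
    rw [Ee, show (-(((m:ℕ)+1 : ℕ):ℤ) - 5) = -(m:ℤ)-6 by push_cast; ring,
        show ((((m:ℕ)+1 : ℕ):ℤ) + 5) = (m:ℤ)+6 by push_cast; ring]
    refine Finset.sum_congr rfl fun i _ => ?_
    rw [show (2*(((m:ℕ)+1 : ℕ):ℤ)+1) = 2*(m:ℤ)+3 by push_cast; ring,
        show ((((m:ℕ)+1 : ℕ)):ℤ) = (m:ℤ)+1 by push_cast; ring]
  rw [hWe]
  have pas : ∀ i ∈ Finset.Icc (-(m:ℤ)-6) ((m:ℤ)+6),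
      bodyS (2*(m:ℤ)+3) ((m:ℤ)+1) 3 i = bodyS (2*(m:ℤ)+2) (m:ℤ) 2 i
        + (Qz (10*i^2+3*i) * (Qz ((m:ℤ)+1-5*i) * Czz 1 (2*(m:ℤ)+2) ((m:ℤ)+1-5*i))
           - Qz (10*i^2+13*i+4) * (Qz ((m:ℤ)+5*i+5) * Czz 1 (2*(m:ℤ)+2) ((m:ℤ)-5*i-3))) := by
    intro i _
    simp only [bodyS]
    rw [Czz_pascalB (b:=1) hb1 (m := 2*(m:ℤ)+3) (r := (m:ℤ)+1-5*i) (Or.inl (by omega)),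
        Czz_pascalA (b:=1) hb1 (m := 2*(m:ℤ)+3) (r := (m:ℤ)+1-5*i-3) (Or.inl (by omega))]
    push_cast
    rw [show (1:ℤ)*((2*(m:ℤ)+3)-((m:ℤ)+1-5*i-3)) = (m:ℤ)+5*i+5 by ring,
        show ((m:ℤ)+1-5*i-3-1 : ℤ) = (m:ℤ)-5*i-3 by ring,
        show ((m:ℤ)+1-5*i-3 : ℤ) = (m:ℤ)-5*i-2 by ring,
        show (1:ℤ)*((m:ℤ)+1-5*i) = (m:ℤ)+1-5*i by ring,
        show ((m:ℤ)+1-5*i-1 : ℤ) = (m:ℤ)-5*i by ring,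
        show ((2*(m:ℤ)+3)-1 : ℤ) = 2*(m:ℤ)+2 by ring]
    ring
  rw [Finset.sum_congr rfl pas, Finset.sum_add_distrib]
  have h1 : ∑ i ∈ Finset.Icc (-(m:ℤ)-6) ((m:ℤ)+6), bodyS (2*(m:ℤ)+2) (m:ℤ) 2 i = Eo m := by
    rw [Eo]
    exact bodyS_sum_eq (by omega) (by omega) (by norm_num) (by omega)
      (by omega) (by omega) (by omega) (by omega)
  rw [h1]
  congr 1
  rw [Finset.sum_sub_distrib]
  have hS1 : ∑ i ∈ Finset.Icc (-(m:ℤ)-6) ((m:ℤ)+6),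
      Qz (10*i^2+3*i) * (Qz ((m:ℤ)+1-5*i) * Czz 1 (2*(m:ℤ)+2) ((m:ℤ)+1-5*i))
      = ∑ i ∈ Finset.Icc (-(m:ℤ)-6) ((m:ℤ)+6),
        Qz (10*i^2-2*i+(m:ℤ)+1) * Czz 1 (2*(m:ℤ)+2) ((m:ℤ)+1-5*i) := by
    refine Finset.sum_congr rfl fun i _ => ?_
    by_cases hc : 0 ≤ (m:ℤ)+1-5*i
    · rw [← mul_assoc, ← Qz_add (aux1 i) hc,
        show 10*i^2+3*i+((m:ℤ)+1-5*i) = 10*i^2-2*i+(m:ℤ)+1 by ring]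
    · rw [Czz_eq_zero (Or.inl (by omega))]
      ring
  have hS2 : ∑ i ∈ Finset.Icc (-(m:ℤ)-6) ((m:ℤ)+6),
      Qz (10*i^2+13*i+4) * (Qz ((m:ℤ)+5*i+5) * Czz 1 (2*(m:ℤ)+2) ((m:ℤ)-5*i-3))
      = ∑ i ∈ Finset.Icc (-(m:ℤ)-6) ((m:ℤ)+6),
        Qz (10*i^2-2*i+(m:ℤ)+1) * Czz 1 (2*(m:ℤ)+2) ((m:ℤ)+2-5*i) := by
    have merge : ∀ i ∈ Finset.Icc (-(m:ℤ)-6) ((m:ℤ)+6),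
        Qz (10*i^2+13*i+4) * (Qz ((m:ℤ)+5*i+5) * Czz 1 (2*(m:ℤ)+2) ((m:ℤ)-5*i-3))
        = Qz (10*i^2+18*i+(m:ℤ)+9) * Czz 1 (2*(m:ℤ)+2) ((m:ℤ)-5*i-3) := by
      intro i _
      by_cases hc : 0 ≤ (m:ℤ)+5*i+5
      · rw [← mul_assoc, ← Qz_add (aux2 i) hc,
          show 10*i^2+13*i+4+((m:ℤ)+5*i+5) = 10*i^2+18*i+(m:ℤ)+9 by ring]
      · rw [Czz_eq_zero (Or.inr (by omega))]
        ring
    rw [Finset.sum_congr rfl merge]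
    have hsh := (sum_shift_down
      (fun i => Qz (10*i^2+18*i+(m:ℤ)+9) * Czz 1 (2*(m:ℤ)+2) ((m:ℤ)-5*i-3))
      (a := -(m:ℤ)-6) (b := (m:ℤ)+6) ?_ ?_).symm
    · rw [hsh]
      refine Finset.sum_congr rfl fun i _ => ?_
      beta_reduce
      rw [show 10*(i-1)^2+18*(i-1)+(m:ℤ)+9 = 10*i^2-2*i+(m:ℤ)+1 by ring,
          show (m:ℤ)-5*(i-1)-3 = (m:ℤ)+2-5*i by ring]
    · beta_reduce
      rw [Czz_eq_zero (Or.inr (by omega)), mul_zero]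
    · beta_reduce
      rw [Czz_eq_zero (Or.inl (by omega)), mul_zero]
  rw [hS1, hS2, ← Finset.sum_sub_distrib]
  have pas2 : ∀ i ∈ Finset.Icc (-(m:ℤ)-6) ((m:ℤ)+6),
      Qz (10*i^2-2*i+(m:ℤ)+1) * Czz 1 (2*(m:ℤ)+2) ((m:ℤ)+1-5*i)
        - Qz (10*i^2-2*i+(m:ℤ)+1) * Czz 1 (2*(m:ℤ)+2) ((m:ℤ)+2-5*i)
      = Qz (10*i^2-2*i+(m:ℤ)+1) * (Qz ((m:ℤ)+1+5*i) * Czz 1 (2*(m:ℤ)+1) ((m:ℤ)-5*i))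
        - Qz (10*i^2-2*i+(m:ℤ)+1) * (Qz ((m:ℤ)+2-5*i) * Czz 1 (2*(m:ℤ)+1) ((m:ℤ)+2-5*i)) := by
    intro i _
    rw [Czz_pascalA (b:=1) hb1 (m := 2*(m:ℤ)+2) (r := (m:ℤ)+1-5*i) (Or.inl (by omega)),
        Czz_pascalB (b:=1) hb1 (m := 2*(m:ℤ)+2) (r := (m:ℤ)+2-5*i) (Or.inl (by omega))]
    push_cast
    rw [show (1:ℤ)*((2*(m:ℤ)+2)-((m:ℤ)+1-5*i)) = (m:ℤ)+1+5*i by ring,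
        show ((m:ℤ)+1-5*i-1 : ℤ) = (m:ℤ)-5*i by ring,
        show (1:ℤ)*((m:ℤ)+2-5*i) = (m:ℤ)+2-5*i by ring,
        show ((m:ℤ)+2-5*i-1 : ℤ) = (m:ℤ)+1-5*i by ring,
        show ((2*(m:ℤ)+2)-1 : ℤ) = 2*(m:ℤ)+1 by ring]
    ring
  rw [Finset.sum_congr rfl pas2, Finset.sum_sub_distrib]
  have hq : Qz (2*(m:ℤ)+2) = q^(2*m+2) := by
    rw [show 2*(m:ℤ)+2 = ((2*m+2 : ℕ):ℤ) by push_cast; ring, Qz_ofNat]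
  have hT1 : ∑ i ∈ Finset.Icc (-(m:ℤ)-6) ((m:ℤ)+6),
      Qz (10*i^2-2*i+(m:ℤ)+1) * (Qz ((m:ℤ)+1+5*i) * Czz 1 (2*(m:ℤ)+1) ((m:ℤ)-5*i))
      = ∑ i ∈ Finset.Icc (-(m:ℤ)-6) ((m:ℤ)+6),
        q^(2*m+2) * (Qz (10*i^2+3*i) * Czz 1 (2*(m:ℤ)+1) ((m:ℤ)-5*i)) := by
    refine Finset.sum_congr rfl fun i _ => ?_
    by_cases hc : 0 ≤ (m:ℤ)+1+5*i
    · rw [← mul_assoc, ← Qz_add (by have := aux3 i; omega) hc,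
        show 10*i^2-2*i+(m:ℤ)+1+((m:ℤ)+1+5*i) = (10*i^2+3*i) + (2*(m:ℤ)+2) by ring,
        Qz_add (aux1 i) (by omega), hq]
      ring
    · rw [Czz_eq_zero (Or.inr (by omega))]
      ring
  have hT2 : ∑ i ∈ Finset.Icc (-(m:ℤ)-6) ((m:ℤ)+6),
      Qz (10*i^2-2*i+(m:ℤ)+1) * (Qz ((m:ℤ)+2-5*i) * Czz 1 (2*(m:ℤ)+1) ((m:ℤ)+2-5*i))
      = ∑ i ∈ Finset.Icc (-(m:ℤ)-6) ((m:ℤ)+6),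
        q^(2*m+2) * (Qz (10*i^2+13*i+4) * Czz 1 (2*(m:ℤ)+1) ((m:ℤ)-5*i-3)) := by
    have merge : ∀ i ∈ Finset.Icc (-(m:ℤ)-6) ((m:ℤ)+6),
        Qz (10*i^2-2*i+(m:ℤ)+1) * (Qz ((m:ℤ)+2-5*i) * Czz 1 (2*(m:ℤ)+1) ((m:ℤ)+2-5*i))
        = Qz (10*i^2-7*i+2*(m:ℤ)+3) * Czz 1 (2*(m:ℤ)+1) ((m:ℤ)+2-5*i) := by
      intro i _
      by_cases hc : 0 ≤ (m:ℤ)+2-5*i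
      · rw [← mul_assoc, ← Qz_add (by have := aux3 i; omega) hc,
          show 10*i^2-2*i+(m:ℤ)+1+((m:ℤ)+2-5*i) = 10*i^2-7*i+2*(m:ℤ)+3 by ring]
      · rw [Czz_eq_zero (Or.inl (by omega))]
        ring
    rw [Finset.sum_congr rfl merge]
    have hsh := (sum_shift_up
      (fun i => Qz (10*i^2-7*i+2*(m:ℤ)+3) * Czz 1 (2*(m:ℤ)+1) ((m:ℤ)+2-5*i))
      (a := -(m:ℤ)-6) (b := (m:ℤ)+6) ?_ ?_).symm
    · rw [hsh]
      refine Finset.sum_congr rfl fun i _ => ?_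
      beta_reduce
      rw [show 10*(i+1)^2-7*(i+1)+2*(m:ℤ)+3 = (10*i^2+13*i+4) + (2*(m:ℤ)+2) by ring,
          show (m:ℤ)+2-5*(i+1) = (m:ℤ)-5*i-3 by ring,
          Qz_add (aux2 i) (by omega), hq]
      ring
    · beta_reduce
      rw [Czz_eq_zero (Or.inr (by omega)), mul_zero]
    · beta_reduce
      rw [Czz_eq_zero (Or.inl (by omega)), mul_zero]
  rw [hT1, hT2, ← Finset.mul_sum, ← Finset.mul_sum, ← mul_sub, ← Finset.sum_sub_distrib]
  have hfold : ∀ i ∈ Finset.Icc (-(m:ℤ)-6) ((m:ℤ)+6),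
      (Qz (10*i^2+3*i) * Czz 1 (2*(m:ℤ)+1) ((m:ℤ)-5*i)
        - Qz (10*i^2+13*i+4) * Czz 1 (2*(m:ℤ)+1) ((m:ℤ)-5*i-3))
      = bodyS (2*(m:ℤ)+1) (m:ℤ) 3 i := by
    intro i _
    rw [bodyS]
  rw [Finset.sum_congr rfl hfold]
  have h2 : ∑ i ∈ Finset.Icc (-(m:ℤ)-6) ((m:ℤ)+6), bodyS (2*(m:ℤ)+1) (m:ℤ) 3 i = Ee m := by
    rw [Ee]
    exact bodyS_sum_eq (by omega) (by omega) (by norm_num) (by omega)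
      (by omega) (by omega) (by omega) (by omega)
  rw [h2]

end RRaux
namespace RRaux
open PowerSeries Finset

lemma Eo_succ (m : ℕ) : Eo (m + 1) = Ee (m + 1) + q^(2*m+3) * Eo m := by
  have hb1 : (0:ℕ) < 1 := by norm_num
  have hWe : Ee (m + 1) = ∑ i ∈ Finset.Icc (-(m:ℤ)-6) ((m:ℤ)+6),
      bodyS (2*(m:ℤ)+3) ((m:ℤ)+1) 3 i := by
    rw [Ee, show (-(((m:ℕ)+1 : ℕ):ℤ) - 5) = -(m:ℤ)-6 by push_cast; ring,
        show ((((m:ℕ)+1 : ℕ):ℤ) + 5) = (m:ℤ)+6 by push_cast; ring]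
    refine Finset.sum_congr rfl fun i _ => ?_
    rw [show (2*(((m:ℕ)+1 : ℕ):ℤ)+1) = 2*(m:ℤ)+3 by push_cast; ring,
        show ((((m:ℕ)+1 : ℕ)):ℤ) = (m:ℤ)+1 by push_cast; ring]
  have hWo : Eo (m + 1) = ∑ i ∈ Finset.Icc (-(m:ℤ)-6) ((m:ℤ)+6),
      bodyS (2*(m:ℤ)+4) ((m:ℤ)+1) 2 i := by
    rw [Eo, show (-(((m:ℕ)+1 : ℕ):ℤ) - 5) = -(m:ℤ)-6 by push_cast; ring,
        show ((((m:ℕ)+1 : ℕ):ℤ) + 5) = (m:ℤ)+6 by push_cast; ring]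
    refine Finset.sum_congr rfl fun i _ => ?_
    rw [show (2*(((m:ℕ)+1 : ℕ):ℤ)+2) = 2*(m:ℤ)+4 by push_cast; ring,
        show ((((m:ℕ)+1 : ℕ)):ℤ) = (m:ℤ)+1 by push_cast; ring]
  rw [hWo]
  have pas : ∀ i ∈ Finset.Icc (-(m:ℤ)-6) ((m:ℤ)+6),
      bodyS (2*(m:ℤ)+4) ((m:ℤ)+1) 2 i = bodyS (2*(m:ℤ)+3) ((m:ℤ)+1) 3 i
        + (Qz (10*i^2+3*i) * (Qz ((m:ℤ)+3+5*i) * Czz 1 (2*(m:ℤ)+3) ((m:ℤ)-5*i))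
           - Qz (10*i^2+13*i+4) * (Qz ((m:ℤ)-5*i-1) * Czz 1 (2*(m:ℤ)+3) ((m:ℤ)-5*i-1))) := by
    intro i _
    simp only [bodyS]
    rw [Czz_pascalA (b:=1) hb1 (m := 2*(m:ℤ)+4) (r := (m:ℤ)+1-5*i) (Or.inl (by omega)),
        Czz_pascalB (b:=1) hb1 (m := 2*(m:ℤ)+4) (r := (m:ℤ)+1-5*i-2) (Or.inl (by omega))]
    push_cast
    rw [show (1:ℤ)*((2*(m:ℤ)+4)-((m:ℤ)+1-5*i)) = (m:ℤ)+3+5*i by ring,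
        show ((m:ℤ)+1-5*i-1 : ℤ) = (m:ℤ)-5*i by ring,
        show (1:ℤ)*((m:ℤ)+1-5*i-2) = (m:ℤ)-5*i-1 by ring,
        show ((m:ℤ)+1-5*i-2-1 : ℤ) = (m:ℤ)-5*i-2 by ring,
        show ((m:ℤ)+1-5*i-2 : ℤ) = (m:ℤ)-5*i-1 by ring,
        show ((m:ℤ)+1-5*i-3 : ℤ) = (m:ℤ)-5*i-2 by ring,
        show ((2*(m:ℤ)+4)-1 : ℤ) = 2*(m:ℤ)+3 by ring]
    ring
  rw [Finset.sum_congr rfl pas, Finset.sum_add_distrib, ← hWe]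
  congr 1
  rw [Finset.sum_sub_distrib]
  have hS1 : ∑ i ∈ Finset.Icc (-(m:ℤ)-6) ((m:ℤ)+6),
      Qz (10*i^2+3*i) * (Qz ((m:ℤ)+3+5*i) * Czz 1 (2*(m:ℤ)+3) ((m:ℤ)-5*i))
      = ∑ i ∈ Finset.Icc (-(m:ℤ)-6) ((m:ℤ)+6),
        Qz (10*i^2+8*i+(m:ℤ)+3) * Czz 1 (2*(m:ℤ)+3) ((m:ℤ)-5*i) := by
    refine Finset.sum_congr rfl fun i _ => ?_
    by_cases hc : 0 ≤ (m:ℤ)+3+5*i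
    · rw [← mul_assoc, ← Qz_add (aux1 i) hc,
        show 10*i^2+3*i+((m:ℤ)+3+5*i) = 10*i^2+8*i+(m:ℤ)+3 by ring]
    · rw [Czz_eq_zero (Or.inr (by omega))]
      ring
  have hS2 : ∑ i ∈ Finset.Icc (-(m:ℤ)-6) ((m:ℤ)+6),
      Qz (10*i^2+13*i+4) * (Qz ((m:ℤ)-5*i-1) * Czz 1 (2*(m:ℤ)+3) ((m:ℤ)-5*i-1))
      = ∑ i ∈ Finset.Icc (-(m:ℤ)-6) ((m:ℤ)+6),
        Qz (10*i^2+8*i+(m:ℤ)+3) * Czz 1 (2*(m:ℤ)+3) ((m:ℤ)-5*i-1) := by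
    refine Finset.sum_congr rfl fun i _ => ?_
    by_cases hc : 0 ≤ (m:ℤ)-5*i-1
    · rw [← mul_assoc, ← Qz_add (aux2 i) hc,
        show 10*i^2+13*i+4+((m:ℤ)-5*i-1) = 10*i^2+8*i+(m:ℤ)+3 by ring]
    · rw [Czz_eq_zero (Or.inl (by omega))]
      ring
  rw [hS1, hS2, ← Finset.sum_sub_distrib]
  have pas2 : ∀ i ∈ Finset.Icc (-(m:ℤ)-6) ((m:ℤ)+6),
      Qz (10*i^2+8*i+(m:ℤ)+3) * Czz 1 (2*(m:ℤ)+3) ((m:ℤ)-5*i)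
        - Qz (10*i^2+8*i+(m:ℤ)+3) * Czz 1 (2*(m:ℤ)+3) ((m:ℤ)-5*i-1)
      = Qz (10*i^2+8*i+(m:ℤ)+3) * (Qz ((m:ℤ)-5*i) * Czz 1 (2*(m:ℤ)+2) ((m:ℤ)-5*i))
        - Qz (10*i^2+8*i+(m:ℤ)+3) * (Qz ((m:ℤ)+5*i+4) * Czz 1 (2*(m:ℤ)+2) ((m:ℤ)-5*i-2)) := by
    intro i _
    rw [Czz_pascalB (b:=1) hb1 (m := 2*(m:ℤ)+3) (r := (m:ℤ)-5*i) (Or.inl (by omega)),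
        Czz_pascalA (b:=1) hb1 (m := 2*(m:ℤ)+3) (r := (m:ℤ)-5*i-1) (Or.inl (by omega))]
    push_cast
    rw [show (1:ℤ)*((2*(m:ℤ)+3)-((m:ℤ)-5*i-1)) = (m:ℤ)+5*i+4 by ring,
        show ((m:ℤ)-5*i-1-1 : ℤ) = (m:ℤ)-5*i-2 by ring,
        show (1:ℤ)*((m:ℤ)-5*i) = (m:ℤ)-5*i by ring,
        show ((m:ℤ)-5*i-1 : ℤ) = (m:ℤ)-5*i-1 by ring,
        show ((2*(m:ℤ)+3)-1 : ℤ) = 2*(m:ℤ)+2 by ring]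
    ring
  rw [Finset.sum_congr rfl pas2, Finset.sum_sub_distrib]
  have hq : Qz (2*(m:ℤ)+3) = q^(2*m+3) := by
    rw [show 2*(m:ℤ)+3 = ((2*m+3 : ℕ):ℤ) by push_cast; ring, Qz_ofNat]
  have hT1 : ∑ i ∈ Finset.Icc (-(m:ℤ)-6) ((m:ℤ)+6),
      Qz (10*i^2+8*i+(m:ℤ)+3) * (Qz ((m:ℤ)-5*i) * Czz 1 (2*(m:ℤ)+2) ((m:ℤ)-5*i))
      = ∑ i ∈ Finset.Icc (-(m:ℤ)-6) ((m:ℤ)+6),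
        q^(2*m+3) * (Qz (10*i^2+3*i) * Czz 1 (2*(m:ℤ)+2) ((m:ℤ)-5*i)) := by
    refine Finset.sum_congr rfl fun i _ => ?_
    by_cases hc : 0 ≤ (m:ℤ)-5*i
    · rw [← mul_assoc, ← Qz_add (by have := aux4 i; omega) hc,
        show 10*i^2+8*i+(m:ℤ)+3+((m:ℤ)-5*i) = (10*i^2+3*i) + (2*(m:ℤ)+3) by ring,
        Qz_add (aux1 i) (by omega), hq]
      ring
    · rw [Czz_eq_zero (Or.inl (by omega))]
      ring
  have hT2 : ∑ i ∈ Finset.Icc (-(m:ℤ)-6) ((m:ℤ)+6),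
      Qz (10*i^2+8*i+(m:ℤ)+3) * (Qz ((m:ℤ)+5*i+4) * Czz 1 (2*(m:ℤ)+2) ((m:ℤ)-5*i-2))
      = ∑ i ∈ Finset.Icc (-(m:ℤ)-6) ((m:ℤ)+6),
        q^(2*m+3) * (Qz (10*i^2+13*i+4) * Czz 1 (2*(m:ℤ)+2) ((m:ℤ)-5*i-2)) := by
    refine Finset.sum_congr rfl fun i _ => ?_
    by_cases hc : 0 ≤ (m:ℤ)+5*i+4
    · rw [← mul_assoc, ← Qz_add (by have := aux4 i; omega) hc,
        show 10*i^2+8*i+(m:ℤ)+3+((m:ℤ)+5*i+4) = (10*i^2+13*i+4) + (2*(m:ℤ)+3) by ring,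
        Qz_add (aux2 i) (by omega), hq]
      ring
    · rw [Czz_eq_zero (Or.inr (by omega))]
      ring
  rw [hT1, hT2, ← Finset.mul_sum, ← Finset.mul_sum, ← mul_sub, ← Finset.sum_sub_distrib]
  have hfold : ∀ i ∈ Finset.Icc (-(m:ℤ)-6) ((m:ℤ)+6),
      (Qz (10*i^2+3*i) * Czz 1 (2*(m:ℤ)+2) ((m:ℤ)-5*i)
        - Qz (10*i^2+13*i+4) * Czz 1 (2*(m:ℤ)+2) ((m:ℤ)-5*i-2))
      = bodyS (2*(m:ℤ)+2) (m:ℤ) 2 i := by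
    intro i _
    rw [bodyS]
  rw [Finset.sum_congr rfl hfold]
  have h2 : ∑ i ∈ Finset.Icc (-(m:ℤ)-6) ((m:ℤ)+6), bodyS (2*(m:ℤ)+2) (m:ℤ) 2 i = Eo m := by
    rw [Eo]
    exact bodyS_sum_eq (by omega) (by omega) (by norm_num) (by omega)
      (by omega) (by omega) (by omega) (by omega)
  rw [h2]

/-- Schur's identity, packaged -/
lemma dd_eq_E : ∀ m : ℕ, dd (2*m) = Ee m ∧ dd (2*m+1) = Eo m := by
  intro m
  induction m with
  | zero =>
      constructor
      · rw [show 2*0 = 0 by ring, dd, Ee_zero]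
      · rw [show 2*0+1 = 1 by ring, dd, Eo_zero]
  | succ m ih =>
      have he : dd (2*(m+1)) = Ee (m+1) := by
        rw [show 2*(m+1) = (2*m)+2 by ring, dd, Ee_succ, ih.1, ih.2]
      constructor
      · exact he
      · rw [show 2*(m+1)+1 = (2*m+1)+2 by ring, dd, show 2*m+1+1 = 2*(m+1) by ring, he, ih.2,
          show 2*m+1+2 = 2*m+3 by ring, Eo_succ]
end RRaux
namespace RRaux
open PowerSeries Finset

/-- Euler product split into residues mod 5 -/
lemma euler_split (M : ℕ) : pochB 1 (5*M) =
    (∏ j ∈ Finset.range M, ((1 - q^(5*j+1)) * (1 - q^(5*j+4)))) * pochB 5 M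
      * ∏ j ∈ Finset.range M, ((1 - q^(5*j+2)) * (1 - q^(5*j+3))) := by
  induction M with
  | zero => simp [pochB]
  | succ M ih =>
      have e0 : 5*(M+1) = (5*M+4)+1 := by ring
      have e1 : pochB 1 (5*(M+1)) = pochB 1 (5*M) * ((1-q^(5*M+1)) * (1-q^(5*M+2))
          * (1-q^(5*M+3)) * (1-q^(5*M+4)) * (1-q^(5*M+5))) := by
        rw [e0, pochB_succ, show (5*M+3)+1 = 5*M+4 from rfl]
        rw [show 5*M+4 = (5*M+3)+1 from rfl, pochB_succ]
        rw [show 5*M+3 = (5*M+2)+1 from rfl, pochB_succ]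
        rw [show 5*M+2 = (5*M+1)+1 from rfl, pochB_succ]
        rw [show 5*M+1 = (5*M)+1 from rfl, pochB_succ]
        rw [show 1*(5*M+1) = 5*M+1 by ring, show 1*(5*M+1+1) = 5*M+2 by ring,
            show 1*(5*M+1+1+1) = 5*M+3 by ring, show 1*(5*M+1+1+1+1) = 5*M+4 by ring,
            show 1*(5*M+1+1+1+1+1) = 5*M+5 by ring]
        ring_nf
      rw [e1, ih, Finset.prod_range_succ, Finset.prod_range_succ, pochB_succ,
        show 5*(M+1) = 5*M+5 by ring]
      ring
  -- note: might need fixing exponent forms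

end RRaux
namespace RRaux
open PowerSeries Finset

lemma sum_Icc_cast (d : ℕ) (f : ℤ → PS) :
    ∑ k ∈ Finset.Icc (0:ℤ) (d:ℤ), f k = ∑ n ∈ Finset.range (d+1), f (n:ℤ) := by
  have hmap : Finset.Icc (0:ℤ) (d:ℤ)
      = (Finset.range (d+1)).map ⟨((↑·) : ℕ → ℤ), Nat.cast_injective⟩ := by
    ext x
    simp only [Finset.mem_Icc, Finset.mem_map, Finset.mem_range, Function.Embedding.coeFn_mk]
    constructor
    · intro ⟨h1, h2⟩
      exact ⟨x.toNat, by omega, by omega⟩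
    · rintro ⟨n, hn, rfl⟩
      omega
  rw [hmap, Finset.sum_map]
  rfl

lemma W_Ff (d L : ℕ) (hL : 4*d+4 ≤ L) :
    W d (Ff L) (∑ n ∈ Finset.range (d+1), q^(n^2+n) * (qPoch n)⁻¹) := by
  have h1 : W d (Ff L) (∑ k ∈ Finset.Icc (0:ℤ) (d:ℤ), Qz (k^2+k) * Czz 1 ((L:ℤ)-k) k) := by
    refine W.sum_subset (Finset.Icc_subset_Icc le_rfl (by omega)) _ fun k hk hk2 => ?_
    rw [Finset.mem_Icc] at hk
    rw [Finset.mem_Icc] at hk2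
    have hkd : (d:ℤ) < k := by omega
    exact W_Qz_mul_zero _ (by nlinarith [hk.1])
  have h2 : W d (∑ k ∈ Finset.Icc (0:ℤ) (d:ℤ), Qz (k^2+k) * Czz 1 ((L:ℤ)-k) k)
      (∑ k ∈ Finset.Icc (0:ℤ) (d:ℤ), Qz (k^2+k) * (pochB 1 k.toNat)⁻¹) := by
    refine W.sum _ _ _ fun k hk => ?_
    rw [Finset.mem_Icc] at hk
    exact (W.refl d _).mul (Czz_approx1 (by norm_num) (by omega) (by omega))
  have h3 : ∑ k ∈ Finset.Icc (0:ℤ) (d:ℤ), Qz (k^2+k) * (pochB 1 k.toNat)⁻¹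
      = ∑ n ∈ Finset.range (d+1), q^(n^2+n) * (qPoch n)⁻¹ := by
    rw [sum_Icc_cast d (fun k => Qz (k^2+k) * (pochB 1 k.toNat)⁻¹)]
    refine Finset.sum_congr rfl fun n _ => ?_
    rw [qPoch_eq_pochB, show ((n:ℤ)^2 + (n:ℤ)) = ((n^2+n : ℕ):ℤ) by push_cast; ring,
      Qz_ofNat, Int.toNat_natCast]
  rw [← h3]
  exact h1.trans h2

/-- truncated theta series -/
noncomputable def thd (d : ℕ) : PS :=
  ∑ i ∈ Finset.Icc (-(d:ℤ)-2) ((d:ℤ)+1), (Qz (10*i^2+3*i) - Qz (10*i^2+13*i+4))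

lemma big1 {d : ℕ} {i : ℤ} (hi : (d:ℤ)+2 ≤ i ∨ i ≤ -(d:ℤ)-2) : (d:ℤ) < 10*i^2+3*i := by
  have hd : (0:ℤ) ≤ (d:ℤ) := Int.natCast_nonneg d
  rcases hi with h | h
  · nlinarith
  · nlinarith

lemma big2 {d : ℕ} {i : ℤ} (hi : (d:ℤ)+2 ≤ i ∨ i ≤ -(d:ℤ)-2) : (d:ℤ) < 10*i^2+13*i+4 := by
  have hd : (0:ℤ) ≤ (d:ℤ) := Int.natCast_nonneg d
  rcases hi with h | h
  · nlinarith
  · nlinarith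

lemma W_Ee_thd (d m : ℕ) (hm : 7*d+14 ≤ m) :
    W d (Ee m) (thd d * (pochB 1 (d+1))⁻¹) := by
  have h1 : W d (Ee m) (∑ i ∈ Finset.Icc (-(d:ℤ)-2) ((d:ℤ)+1), bodyS (2*(m:ℤ)+1) (m:ℤ) 3 i) := by
    rw [Ee]
    refine W.sum_subset (Finset.Icc_subset_Icc (by omega) (by omega)) _ fun i hi hi2 => ?_
    rw [Finset.mem_Icc] at hi
    rw [Finset.mem_Icc] at hi2
    have hii : (d:ℤ)+2 ≤ i ∨ i ≤ -(d:ℤ)-2 := by omega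
    rw [bodyS]
    have z1 := W_Qz_mul_zero (Czz 1 (2*(m:ℤ)+1) ((m:ℤ) - 5*i)) (big1 hii)
    have z2 := W_Qz_mul_zero (Czz 1 (2*(m:ℤ)+1) ((m:ℤ) - 5*i - 3)) (big2 hii)
    have := z1.sub z2
    simpa using this
  have h2 : W d (∑ i ∈ Finset.Icc (-(d:ℤ)-2) ((d:ℤ)+1), bodyS (2*(m:ℤ)+1) (m:ℤ) 3 i)
      (∑ i ∈ Finset.Icc (-(d:ℤ)-2) ((d:ℤ)+1),
        (Qz (10*i^2+3*i) * (pochB 1 (d+1))⁻¹ - Qz (10*i^2+13*i+4) * (pochB 1 (d+1))⁻¹)) := by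
    refine W.sum _ _ _ fun i hi => ?_
    rw [Finset.mem_Icc] at hi
    rw [bodyS]
    exact ((W.refl d _).mul (Czz_approx (by norm_num) (by omega) (by omega))).sub
      ((W.refl d _).mul (Czz_approx (by norm_num) (by omega) (by omega)))
  have h3 : thd d * (pochB 1 (d+1))⁻¹
      = ∑ i ∈ Finset.Icc (-(d:ℤ)-2) ((d:ℤ)+1),
        (Qz (10*i^2+3*i) * (pochB 1 (d+1))⁻¹ - Qz (10*i^2+13*i+4) * (pochB 1 (d+1))⁻¹) := by
    rw [thd, Finset.sum_mul]
    exact Finset.sum_congr rfl fun i _ => sub_mul _ _ _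
  rw [h3]
  exact h1.trans h2

lemma W_Sj_thd (d nn : ℕ) (hnn : 3*d+10 ≤ nn) :
    W d (Sj nn) (thd d * (pochB 5 (d+1))⁻¹) := by
  have hsplit : ∑ k ∈ Finset.Icc (-(2*(d:ℤ)+4)) (2*(d:ℤ)+3), thA k
      = thd d := by
    have hbi : Finset.Icc (-(2*(d:ℤ)+4)) (2*(d:ℤ)+3)
        = (Finset.Icc (-(d:ℤ)-2) ((d:ℤ)+1)).biUnion (fun i => {2*i, 2*i+1}) := by
      ext x
      simp only [Finset.mem_Icc, Finset.mem_biUnion, Finset.mem_insert, Finset.mem_singleton]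
      constructor
      · intro ⟨h1, h2⟩
        refine ⟨x / 2, by omega, by omega⟩
      · rintro ⟨i, hi, rfl | rfl⟩ <;> omega
    rw [hbi, Finset.sum_biUnion (by
      intro i _ j _ hij
      simp only [Finset.disjoint_left, Finset.mem_insert, Finset.mem_singleton]
      rintro a (rfl | rfl) (h | h) <;> omega)]
    rw [thd]
    refine Finset.sum_congr rfl fun i _ => ?_
    rw [Finset.sum_pair (by omega)]
    rw [thA, thA, eps_even, eps_odd, sg_even, sg_odd, one_mul, neg_one_mul, sub_eq_add_neg]
  have h1 : W d (Sj nn) (∑ k ∈ Finset.Icc (-(2*(d:ℤ)+4)) (2*(d:ℤ)+3),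
      thA k * Czz 5 (2*(nn:ℤ)) ((nn:ℤ)+k)) := by
    rw [Sj]
    refine W.sum_subset (Finset.Icc_subset_Icc (by omega) (by omega)) _ fun k hk hk2 => ?_
    rw [Finset.mem_Icc] at hk
    rw [Finset.mem_Icc] at hk2
    have hsg : (d:ℤ) < sg k := sg_big (by omega)
    have z := W.mul_left_zero (eps k) (W_Qz_mul_zero (Czz 5 (2*(nn:ℤ)) ((nn:ℤ)+k)) hsg)
    rw [thA, mul_assoc]
    simpa using z
  have h2 : W d (∑ k ∈ Finset.Icc (-(2*(d:ℤ)+4)) (2*(d:ℤ)+3),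
      thA k * Czz 5 (2*(nn:ℤ)) ((nn:ℤ)+k))
      (∑ k ∈ Finset.Icc (-(2*(d:ℤ)+4)) (2*(d:ℤ)+3), thA k * (pochB 5 (d+1))⁻¹) := by
    refine W.sum _ _ _ fun k hk => ?_
    rw [Finset.mem_Icc] at hk
    exact (W.refl d _).mul (Czz_approx (by norm_num) (by omega) (by omega))
  have h3 : ∑ k ∈ Finset.Icc (-(2*(d:ℤ)+4)) (2*(d:ℤ)+3), thA k * (pochB 5 (d+1))⁻¹
      = thd d * (pochB 5 (d+1))⁻¹ := by
    rw [← Finset.sum_mul, hsplit]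
  rw [← h3]
  exact h1.trans h2

end RRaux
namespace RRaux
open PowerSeries Finset

lemma hv_u : ∀ d n : ℕ, d < n → coeff d (q^(n^2+n) * (qPoch n)⁻¹) = 0 := by
  intro d n h
  have h2 : d < n^2+n := by nlinarith
  have := W_q_pow_mul_zero (d := d) ((qPoch n)⁻¹) h2 d le_rfl
  simpa using this

lemma hv_v : ∀ d k : ℕ, d < k → W d ((1 - q^(5*k+2)) * (1 - q^(5*k+3))) 1 := by
  intro d k h
  have := (W_one_sub_q_pow (d := d) (m := 5*k+2) (by omega)).mul
    (W_one_sub_q_pow (d := d) (m := 5*k+3) (by omega))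
  simpa using this

lemma main_eq :
    (∑' n : ℕ, q ^ (n ^ 2 + n) * (qPoch n)⁻¹)
      * (∏' k : ℕ, ((1 - q ^ (5 * k + 2)) * (1 - q ^ (5 * k + 3)))) = 1 := by
  ext d
  set m := 7*d+14 with hmdef
  set nn := 3*d+10 with hnndef
  -- left factor
  have c1 : W d (∑' n : ℕ, q ^ (n ^ 2 + n) * (qPoch n)⁻¹)
      (∑ n ∈ Finset.range (d+1), q^(n^2+n) * (qPoch n)⁻¹) :=
    tsum_W _ hv_u d (d+1) (by omega)
  have c2 : W d (Ff (2*m)) (∑ n ∈ Finset.range (d+1), q^(n^2+n) * (qPoch n)⁻¹) :=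
    W_Ff d (2*m) (by omega)
  have hFE : Ff (2*m) = Ee m := by rw [← dd_eq_Ff, (dd_eq_E m).1]
  have c3 : W d (∑' n : ℕ, q ^ (n ^ 2 + n) * (qPoch n)⁻¹) (Ee m) := by
    refine c1.trans ?_
    rw [← hFE]
    exact c2.symm
  -- right factor
  have c4 : W d (∏' k : ℕ, ((1 - q ^ (5 * k + 2)) * (1 - q ^ (5 * k + 3))))
      (∏ k ∈ Finset.range nn, ((1 - q ^ (5 * k + 2)) * (1 - q ^ (5 * k + 3)))) :=
    tprod_W _ hv_v d nn (by omega)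
  have c5 := c3.mul c4
  -- theta side
  have c6 : W d (Ee m) (thd d * (pochB 1 (d+1))⁻¹) := W_Ee_thd d m (by omega)
  have c7 : W d (∏ j ∈ Finset.range nn, ((1 - q^(5*j+1)) * (1 - q^(5*j+4))))
      (thd d * (pochB 5 (d+1))⁻¹) := by
    rw [← jtp nn]
    exact W_Sj_thd d nn (by omega)
  have hccP5 : constantCoeff (pochB 5 (d+1)) ≠ 0 := by
    rw [cc_pochB _ _ (by norm_num)]; exact one_ne_zero
  have c8 : W d (thd d)
      ((∏ j ∈ Finset.range nn, ((1 - q^(5*j+1)) * (1 - q^(5*j+4)))) * pochB 5 (d+1)) := by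
    have h := c7.mul (W.refl d (pochB 5 (d+1)))
    have he : thd d * (pochB 5 (d+1))⁻¹ * pochB 5 (d+1) = thd d := by
      rw [mul_assoc, mul_comm ((pochB 5 (d+1))⁻¹), PowerSeries.mul_inv_cancel _ hccP5, mul_one]
    rw [he] at h
    exact h.symm
  -- put P5 to level nn
  have c10 : W d (pochB 5 (d+1)) (pochB 5 nn) :=
    (W_pochB (by norm_num) (show d+1 ≤ nn by omega) (by omega)).symm
  have c11 : W d (thd d)
      ((∏ j ∈ Finset.range nn, ((1 - q^(5*j+1)) * (1 - q^(5*j+4)))) * pochB 5 nn) :=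
    c8.trans ((W.refl d _).mul c10)
  -- combine all
  have c12 : W d ((∑' n : ℕ, q ^ (n ^ 2 + n) * (qPoch n)⁻¹)
      * (∏' k : ℕ, ((1 - q ^ (5 * k + 2)) * (1 - q ^ (5 * k + 3)))))
      ((((∏ j ∈ Finset.range nn, ((1 - q^(5*j+1)) * (1 - q^(5*j+4)))) * pochB 5 nn)
        * (pochB 1 (d+1))⁻¹)
        * ∏ k ∈ Finset.range nn, ((1 - q ^ (5 * k + 2)) * (1 - q ^ (5 * k + 3)))) :=
    c5.trans (((c6.trans (c11.mul (W.refl d (pochB 1 (d+1))⁻¹))).mul (W.refl d _)))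
  have c13 : (((∏ j ∈ Finset.range nn, ((1 - q^(5*j+1)) * (1 - q^(5*j+4)))) * pochB 5 nn)
        * (pochB 1 (d+1))⁻¹)
        * (∏ k ∈ Finset.range nn, ((1 - q ^ (5 * k + 2)) * (1 - q ^ (5 * k + 3))))
      = pochB 1 (5*nn) * (pochB 1 (d+1))⁻¹ := by
    rw [euler_split nn]
    ring
  rw [c13] at c12
  have hccP1 : constantCoeff (pochB 1 (d+1)) ≠ 0 := by
    rw [cc_pochB _ _ (by norm_num)]; exact one_ne_zero
  have c14 : W d (pochB 1 (5*nn) * (pochB 1 (d+1))⁻¹) 1 := by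
    have h := (W_pochB (b := 1) (by norm_num) (show d+1 ≤ 5*nn by omega) (by omega)).mul
      (W.refl d (pochB 1 (d+1))⁻¹)
    rw [PowerSeries.mul_inv_cancel _ hccP1] at h
    exact h
  exact (c12.trans c14) d le_rfl

end RRaux

/-- The second Rogers–Ramanujan identity. -/
theorem rogers_ramanujan_second :
    ∑' n : ℕ, q ^ (n ^ 2 + n) * (qPoch n)⁻¹
      = (∏' k : ℕ, ((1 - q ^ (5 * k + 2)) * (1 - q ^ (5 * k + 3))))⁻¹ := by
  have hccP : PowerSeries.constantCoeff
      (∏' k : ℕ, ((1 - q ^ (5 * k + 2)) * (1 - q ^ (5 * k + 3)))) ≠ 0 := by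
    have h := RRaux.tprod_W _ RRaux.hv_v 0 1 (by omega) 0 le_rfl
    rw [Finset.prod_range_one] at h
    rw [← PowerSeries.coeff_zero_eq_constantCoeff, h]
    rw [PowerSeries.coeff_zero_eq_constantCoeff, map_mul,
      RRaux.cc_one_sub_q_pow _ (by norm_num), RRaux.cc_one_sub_q_pow _ (by norm_num)]
    norm_num
  exact ((PowerSeries.inv_eq_iff_mul_eq_one hccP).mpr RRaux.main_eq).symm
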